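/- arXiv:1608.02219 — 3 statements merged into one kernel-verified Lean document; each statement's English description precedes it below -/
import Mathlib

section
/- Constancy of the Wronskian (determinant of the transfer matrix equals 1): Let (a, μ) ∈ AM(ℝ) (with respect to some nonzero nonnegative periodic Borel measure ρ with ‖ρ‖_unif < ∞), let s ∈ ℝ, and let (uN, vN) and (uD, vD) be solutions of H_{a,μ} w = 0 with uN(s) = 1, vN(s) = 0, uD(s) = 0, vD(s) = 1. Then uN(t)·vD(t) − uD(t)·vN(t) = 1 for all t ∈ ℝ. -/
open MeasureTheory Set Filter

noncomputable section

/-- A nonnegative Borel measure on `ℝ` is finite on bounded sets. -/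
def FiniteOnBounded (ν : MeasureTheory.Measure ℝ) : Prop :=
  ∀ s : Set ℝ, Bornology.IsBounded s → ν s < ⊤

/-- `⨆ t, ν ((t, t+1])` in `ℝ≥0∞`. -/
def unifE (ν : MeasureTheory.Measure ℝ) : ENNReal := ⨆ t : ℝ, ν (Set.Ioc t (t + 1))

/-- The uniform norm `‖ν‖_unif` as a real number. -/
def unifNorm (ν : MeasureTheory.Measure ℝ) : ℝ := (unifE ν).toReal

/-- Signed value of the real local measure `μ = (μp, μm)` on a set `B`. -/
def lmVal (μp μm : MeasureTheory.Measure ℝ) (B : Set ℝ) : ℝ := (μp B).toReal - (μm B).toReal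

/-- Signed integral `∫ f dμ` w.r.t. the real local measure `μ = (μp, μm)`. -/
def lmInt (μp μm : MeasureTheory.Measure ℝ) (f : ℝ → ℝ) : ℝ := (∫ x, f x ∂μp) - (∫ x, f x ∂μm)

/-- The (topological) support of a measure on `ℝ`. -/
def measSupport (ρ : MeasureTheory.Measure ℝ) : Set ℝ :=
  {x : ℝ | ∀ ε : ℝ, 0 < ε → 0 < ρ (Set.Ioo (x - ε) (x + ε))}

/-- `p` is a period of `ρ`, i.e. `p ≠ 0` and `ρ (B + p) = ρ B` for all `B`
(note `B + p = (· - p) ⁻¹' B`). -/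
def IsPeriod (ρ : MeasureTheory.Measure ℝ) (p : ℝ) : Prop :=
  p ≠ 0 ∧ ∀ B : Set ℝ, ρ ((fun x => x - p) ⁻¹' B) = ρ B

/-- Supremum norm of a (bounded) function. -/
def supNorm (a : ℝ → ℝ) : ℝ := sSup (Set.range a)

/-- The class `AM(ℝ)`: `a` Borel measurable with `0 < inf a` and `sup a < ∞`, and
`μ = (μp, μm)` a real local measure with `‖μ‖_unif < ∞` and `|μ|(ℝ ∖ supp ρ) = 0`. -/
structure AM (ρ : MeasureTheory.Measure ℝ) (a : ℝ → ℝ)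
    (μp μm : MeasureTheory.Measure ℝ) : Prop where
  meas_a : Measurable a
  inf_pos : 0 < ⨅ x : ℝ, a x
  bddAbove : BddAbove (Set.range a)
  finp : FiniteOnBounded μp
  finm : FiniteOnBounded μm
  unif_lt_top : unifE (μp + μm) < ⊤
  supp_sub : (μp + μm) ((measSupport ρ)ᶜ) = 0

/-- `(u, v)` is a solution of `H_{a,μ} u = z u` with weight `ρ`
(`v` playing the role of `a·u'`). -/
structure IsSolution (a : ℝ → ℝ) (μp μm ρ : MeasureTheory.Measure ℝ) (z : ℝ)
    (u v : ℝ → ℝ) : Prop where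
  meas_u : Measurable u
  meas_v : Measurable v
  eq_u : ∀ t : ℝ, u t = u 0 + ∫ s in (0:ℝ)..t, v s / a s
  eq_v : ∀ s t : ℝ, s ≤ t →
    v t - v s = ((∫ x in Set.Ioc s t, u x ∂μp) - (∫ x in Set.Ioc s t, u x ∂μm))
      - z * ∫ x in Set.Ioc s t, u x ∂ρ

/-- `(u, v)` is a solution of `H_{a,μ} u = 0`. -/
structure IsSolution0 (a : ℝ → ℝ) (μp μm : MeasureTheory.Measure ℝ)
    (u v : ℝ → ℝ) : Prop where
  meas_u : Measurable u
  meas_v : Measurable v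
  eq_u : ∀ t : ℝ, u t = u 0 + ∫ s in (0:ℝ)..t, v s / a s
  eq_v : ∀ s t : ℝ, s ≤ t →
    v t - v s = (∫ x in Set.Ioc s t, u x ∂μp) - (∫ x in Set.Ioc s t, u x ∂μm)

/-- Wasserstein-type seminorm `‖μ − ν‖_I` of the difference of two real local measures. -/
def wNorm (μp μm νp νm : MeasureTheory.Measure ℝ) (I : Set ℝ) : ℝ :=
  sSup {r : ℝ | ∃ w : ℝ → ℝ, LipschitzWith 1 w ∧ HasCompactSupport w ∧
    tsupport w ⊆ I ∧ Metric.diam (tsupport w) ≤ 2 ∧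
    r = |lmInt μp μm w - lmInt νp νm w|}

/-- Translate of a measure: `(lmTranslate ν p) B = ν (B + p)`. -/
def lmTranslate (ν : MeasureTheory.Measure ℝ) (p : ℝ) : MeasureTheory.Measure ℝ :=
  MeasureTheory.Measure.map (fun x => x - p) ν

/-- The primitive `φ_μ` of a real local measure `μ = (μp, μm)`. -/
def phiLM (μp μm : MeasureTheory.Measure ℝ) (t : ℝ) : ℝ :=
  if 0 ≤ t then lmVal μp μm (Set.Ioc 0 t) else -(lmVal μp μm (Set.Ioc t 0))

open scoped ENNReal NNReal

section AuxWron

/-- junk-safe bound for set integrals of bounded functions -/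
lemma junk_abs_le {μ : Measure ℝ} {f : ℝ → ℝ} {s : Set ℝ} {B : ℝ}
    (hs : MeasurableSet s) (hμ : μ s ≠ ⊤) (hB : ∀ x ∈ s, |f x| ≤ B) :
    |∫ x in s, f x ∂μ| ≤ B * (μ s).toReal := by
  rcases eq_empty_or_nonempty s with rfl | ⟨x0, hx0⟩
  · simp
  have hB0 : (0:ℝ) ≤ B := le_trans (abs_nonneg _) (hB x0 hx0)
  have h1 : |∫ x in s, f x ∂μ| ≤ (∫⁻ x in s, ENNReal.ofReal ‖f x‖ ∂μ).toReal := by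
    simpa [Real.norm_eq_abs] using norm_integral_le_lintegral_norm (μ := μ.restrict s) f
  refine h1.trans ?_
  have h2 : (∫⁻ x in s, ENNReal.ofReal ‖f x‖ ∂μ) ≤ ENNReal.ofReal B * μ s := by
    calc ∫⁻ x in s, ENNReal.ofReal ‖f x‖ ∂μ ≤ ∫⁻ _x in s, ENNReal.ofReal B ∂μ := by
          refine lintegral_mono_ae (ae_restrict_of_forall_mem hs fun x hx => ?_)
          exact ENNReal.ofReal_le_ofReal (by simpa [Real.norm_eq_abs] using hB x hx)
      _ = ENNReal.ofReal B * μ s := setLIntegral_const _ _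
  have hne : ENNReal.ofReal B * μ s ≠ ⊤ := ENNReal.mul_ne_top ENNReal.ofReal_ne_top hμ
  have h3 := ENNReal.toReal_mono hne h2
  rwa [ENNReal.toReal_mul, ENNReal.toReal_ofReal hB0] at h3

lemma integrableOn_of_bdd {μ : Measure ℝ} {f : ℝ → ℝ} {s : Set ℝ} {B : ℝ}
    (hs : MeasurableSet s) (hμ : μ s ≠ ⊤) (hf : Measurable f)
    (hB : ∀ x ∈ s, |f x| ≤ B) : IntegrableOn f s μ := by
  refine Integrable.mono' (g := fun _ => B) ((integrableOn_const_iff).2 (Or.inr hμ.lt_top))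
    hf.aestronglyMeasurable.restrict ?_
  exact ae_restrict_of_forall_mem hs fun x hx => by simpa [Real.norm_eq_abs] using hB x hx

lemma a_low {a : ℝ → ℝ} (h : 0 < ⨅ x, a x) : ∀ x, (⨅ x, a x) ≤ a x := by
  intro x
  by_cases hb : BddBelow (Set.range a)
  · exact ciInf_le hb x
  · rw [Real.iInf_of_not_bddBelow hb] at h; exact absurd h (lt_irrefl 0)

lemma norm_div_le_aux {a v : ℝ → ℝ} {ia : ℝ} (hia : 0 < ia) (hle : ∀ x, ia ≤ a x) (x : ℝ) :
    |v x / a x| ≤ ia⁻¹ * |v x| := by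
  have hax : 0 < a x := lt_of_lt_of_le hia (hle x)
  rw [abs_div, abs_of_pos hax]
  rw [inv_mul_eq_div]
  exact div_le_div_of_nonneg_left (abs_nonneg _) hia (hle x)

lemma intOn_div {a v : ℝ → ℝ} {ia : ℝ} (hia : 0 < ia) (hle : ∀ x, ia ≤ a x)
    (ha : Measurable a) (hv : Measurable v) {s : Set ℝ}
    (h : IntegrableOn v s volume) : IntegrableOn (fun x => v x / a x) s volume := by
  refine Integrable.mono' (g := fun x => ia⁻¹ * |v x|) ?_
    ((hv.div ha).aestronglyMeasurable.restrict) ?_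
  · exact ((h.abs).const_mul _)
  · refine Eventually.of_forall fun x => ?_
    simp only [Real.norm_eq_abs]
    exact norm_div_le_aux hia hle x

lemma intOn_of_div {a v : ℝ → ℝ} {ia sa : ℝ} (hia : 0 < ia) (hle : ∀ x, ia ≤ a x)
    (hsa : ∀ x, a x ≤ sa) (hv : Measurable v) {s : Set ℝ}
    (h : IntegrableOn (fun x => v x / a x) s volume) : IntegrableOn v s volume := by
  refine Integrable.mono' (g := fun x => sa * |v x / a x|) ((h.abs).const_mul _)
    (hv.aestronglyMeasurable.restrict) ?_
  refine Eventually.of_forall fun x => ?_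
  have hax : 0 < a x := lt_of_lt_of_le hia (hle x)
  have : v x = (v x / a x) * a x := by field_simp
  rw [Real.norm_eq_abs]; nth_rw 1 [this]; rw [abs_mul, abs_of_pos hax]
  have h1 : |v x / a x| * a x ≤ |v x / a x| * sa := by
    apply mul_le_mul_of_nonneg_left (hsa x) (abs_nonneg _)
  calc |v x / a x| * a x ≤ |v x / a x| * sa := h1
    _ = sa * |v x / a x| := mul_comm _ _

lemma toReal_measure_mono {μ : Measure ℝ} {s t : Set ℝ} (h : s ⊆ t) (ht : μ t ≠ ⊤) :
    (μ s).toReal ≤ (μ t).toReal := ENNReal.toReal_mono ht (measure_mono h)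


section StepRight

variable {a : ℝ → ℝ} {μp μm : Measure ℝ} {u v : ℝ → ℝ} {ia sa : ℝ}

lemma step_right
    (hsol : IsSolution0 a μp μm u v)
    (hia : 0 < ia) (hle : ∀ x, ia ≤ a x) (hsa : ∀ x, a x ≤ sa)
    (ha : Measurable a)
    (finp : FiniteOnBounded μp) (finm : FiniteOnBounded μm)
    (c r : ℝ) (h0c : 0 ≤ c) (hcr : c ≤ r)
    (contr : (r - c) * ((μp (Ioc c r)).toReal + (μm (Ioc c r)).toReal) ≤ ia / 2)
    (hGood : IntegrableOn v (Ioc 0 c) volume) :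
    IntegrableOn v (Ioc 0 r) volume := by
  have hv := hsol.meas_v
  have hpfin : μp (Ioc c r) ≠ ⊤ :=
    (finp _ ((Metric.isBounded_Icc c r).subset Ioc_subset_Icc_self)).ne
  have hmfin : μm (Ioc c r) ≠ ⊤ :=
    (finm _ ((Metric.isBounded_Icc c r).subset Ioc_subset_Icc_self)).ne
  set Kp := (μp (Ioc c r)).toReal with hKp
  set Km := (μm (Ioc c r)).toReal with hKm
  set K := Kp + Km with hK
  have hK0 : 0 ≤ K := add_nonneg ENNReal.toReal_nonneg ENNReal.toReal_nonneg
  -- genuine u equation on good subintervals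
  have key_u : ∀ x ∈ Icc c r, IntegrableOn v (Ioc c x) volume →
      u x = u c + ∫ y in Ioc c x, v y / a y := by
    intro x hx hvx
    have h0x : IntegrableOn v (Ioc 0 x) volume := by
      have he : Ioc 0 c ∪ Ioc c x = Ioc 0 x := Ioc_union_Ioc_eq_Ioc h0c hx.1
      exact he ▸ hGood.union hvx
    have gu : ∀ t, 0 ≤ t → IntegrableOn v (Ioc 0 t) volume →
        u t = u 0 + ∫ y in Ioc 0 t, v y / a y := by
      intro t ht _
      have := hsol.eq_u t
      rwa [intervalIntegral.integral_of_le ht] at this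
    have hx0 : (0:ℝ) ≤ x := le_trans h0c hx.1
    have e1 := gu x hx0 h0x
    have e2 := gu c h0c hGood
    have hsplit : ∫ y in Ioc 0 x, v y / a y
        = (∫ y in Ioc 0 c, v y / a y) + ∫ y in Ioc c x, v y / a y := by
      rw [← Ioc_union_Ioc_eq_Ioc h0c hx.1]
      exact setIntegral_union (Set.Ioc_disjoint_Ioc_of_le le_rfl) measurableSet_Ioc
        (intOn_div hia hle ha hv hGood) (intOn_div hia hle ha hv hvx)
    rw [e1, e2, hsplit]; ring
  -- bound for u on good subintervals
  have u_bound : ∀ t ∈ Icc c r, IntegrableOn v (Ioc c t) volume → ∀ x ∈ Icc c t,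
      |u x| ≤ |u c| + ia⁻¹ * ∫ y in Ioc c t, |v y| := by
    intro t ht hvt x hx
    have hvx : IntegrableOn v (Ioc c x) volume := hvt.mono_set (Ioc_subset_Ioc_right hx.2)
    have hxr : x ∈ Icc c r := ⟨hx.1, le_trans hx.2 ht.2⟩
    rw [key_u x hxr hvx]
    have h1 : |∫ y in Ioc c x, v y / a y| ≤ ∫ y in Ioc c x, ia⁻¹ * |v y| := by
      refine le_trans ?_ (setIntegral_mono_on (intOn_div hia hle ha hv hvx).abs
        ((hvx.abs).const_mul _) measurableSet_Ioc ?_)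
      · have hni := norm_integral_le_integral_norm
          (μ := volume.restrict (Ioc c x)) (fun y => v y / a y)
        simp only [Real.norm_eq_abs] at hni
        exact hni
      · intro y _; exact norm_div_le_aux hia hle y
    have h2 : ∫ y in Ioc c x, ia⁻¹ * |v y| ≤ ∫ y in Ioc c t, ia⁻¹ * |v y| := by
      refine setIntegral_mono_set ((hvt.abs).const_mul _) ?_ ?_
      · exact ae_restrict_of_forall_mem measurableSet_Ioc fun y _ =>
          mul_nonneg (inv_nonneg.2 hia.le) (abs_nonneg _)
      · exact HasSubset.Subset.eventuallyLE (Ioc_subset_Ioc_right hx.2)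
    have h3 : ∫ y in Ioc c t, ia⁻¹ * |v y| = ia⁻¹ * ∫ y in Ioc c t, |v y| := by
      exact integral_const_mul _ _
    calc |u c + ∫ y in Ioc c x, v y / a y| ≤ |u c| + |∫ y in Ioc c x, v y / a y| :=
          abs_add_le _ _
      _ ≤ |u c| + ia⁻¹ * ∫ y in Ioc c t, |v y| := by
          rw [← h3]; exact add_le_add_right (h1.trans h2) _
  -- junk-safe bound for v
  have v_bound : ∀ x ∈ Ioc c r, ∀ B : ℝ, 0 ≤ B → (∀ y ∈ Ioc c x, |u y| ≤ B) →
      |v x| ≤ |v c| + B * K := by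
    intro x hx B hB0 hB
    have hev := hsol.eq_v c x hx.1.le
    have hsub : Ioc c x ⊆ Ioc c r := Ioc_subset_Ioc_right hx.2
    have hpx : μp (Ioc c x) ≠ ⊤ := fun h => hpfin (eq_top_iff.2 (h ▸ measure_mono hsub))
    have hmx : μm (Ioc c x) ≠ ⊤ := fun h => hmfin (eq_top_iff.2 (h ▸ measure_mono hsub))
    have h1 : |∫ y in Ioc c x, u y ∂μp| ≤ B * Kp := by
      refine (junk_abs_le measurableSet_Ioc hpx hB).trans ?_
      exact mul_le_mul_of_nonneg_left (toReal_measure_mono hsub hpfin) hB0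
    have h2 : |∫ y in Ioc c x, u y ∂μm| ≤ B * Km := by
      refine (junk_abs_le measurableSet_Ioc hmx hB).trans ?_
      exact mul_le_mul_of_nonneg_left (toReal_measure_mono hsub hmfin) hB0
    have : v x = v c + ((∫ y in Ioc c x, u y ∂μp) - ∫ y in Ioc c x, u y ∂μm) := by
      linarith [hev]
    rw [this, hK]
    calc |v c + ((∫ y in Ioc c x, u y ∂μp) - ∫ y in Ioc c x, u y ∂μm)|
        ≤ |v c| + (|∫ y in Ioc c x, u y ∂μp| + |∫ y in Ioc c x, u y ∂μm|) := by
          refine (abs_add_le _ _).trans (add_le_add_right ?_ _)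
          exact (abs_sub _ _)
      _ ≤ |v c| + (B * Kp + B * Km) := by
          exact add_le_add_right (add_le_add h1 h2) _
      _ = |v c| + B * (Kp + Km) := by ring
  -- uniform a-priori bound
  set D := 2 * ((r - c) * |v c| + (r - c) * K * |u c|) with hD
  have claimA1 : ∀ t ∈ Icc c r, IntegrableOn v (Ioc c t) volume →
      (∫ y in Ioc c t, |v y|) ≤ D := by
    intro t ht hvt
    set h := ∫ y in Ioc c t, |v y| with hh
    have h_nonneg : 0 ≤ h := setIntegral_nonneg measurableSet_Ioc fun y _ => abs_nonneg _
    set M := |u c| + ia⁻¹ * h with hM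
    have hM0 : 0 ≤ M := by positivity
    have hub : ∀ x ∈ Ioc c t, |u x| ≤ M := fun x hx =>
      u_bound t ht hvt x ⟨hx.1.le, hx.2⟩
    have hvb : ∀ x ∈ Ioc c t, |v x| ≤ |v c| + M * K := by
      intro x hx
      refine v_bound x ⟨hx.1, le_trans hx.2 ht.2⟩ M hM0 fun y hy =>
        hub y ⟨hy.1, le_trans hy.2 hx.2⟩
    have hC0 : 0 ≤ |v c| + M * K := by positivity
    have hint : h ≤ (|v c| + M * K) * (r - c) := by
      calc h ≤ ∫ _y in Ioc c t, (|v c| + M * K) :=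
            setIntegral_mono_on hvt.abs ((integrableOn_const_iff).2 (Or.inr (by
              rw [Real.volume_Ioc]; exact ENNReal.ofReal_lt_top))) measurableSet_Ioc hvb
        _ = (volume (Ioc c t)).toReal * (|v c| + M * K) := by
            rw [setIntegral_const]; rfl
        _ ≤ (r - c) * (|v c| + M * K) := by
            refine mul_le_mul_of_nonneg_right ?_ hC0
            rw [Real.volume_Ioc, ENNReal.toReal_ofReal (by linarith [ht.1] : (0:ℝ) ≤ t - c)]
            linarith [ht.2]
        _ = (|v c| + M * K) * (r - c) := mul_comm _ _
    have contr' : (r - c) * K * ia⁻¹ ≤ 1 / 2 := by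
      have h1 : (r - c) * K * ia⁻¹ ≤ (ia / 2) * ia⁻¹ :=
        mul_le_mul_of_nonneg_right contr (inv_nonneg.2 hia.le)
      have h2 : (ia / 2) * ia⁻¹ = 1 / 2 := by field_simp
      linarith
    have hrc0 : 0 ≤ r - c := by linarith
    rw [hM] at hint
    rw [hD]
    have hint2 : (r-c)*K*ia⁻¹*h ≤ (1/2)*h := mul_le_mul_of_nonneg_right contr' h_nonneg
    have hexp : (|v c| + (|u c| + ia⁻¹ * h) * K) * (r - c)
        = (r-c)*|v c| + (r-c)*K*|u c| + (r-c)*K*ia⁻¹*h := by ring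
    rw [hexp] at hint
    clear_value h M D K Kp Km
    linarith
  -- the set of good endpoints
  set S : Set ℝ := {t | t ∈ Icc c r ∧ IntegrableOn v (Ioc c t) volume} with hS
  have hcS : c ∈ S := ⟨⟨le_refl c, hcr⟩, by simp⟩
  have hSne : S.Nonempty := ⟨c, hcS⟩
  have hSbdd : BddAbove S := ⟨r, fun t ht => ht.1.2⟩
  set t₂ := sSup S with ht₂
  have hct2 : c ≤ t₂ := le_csSup hSbdd hcS
  have ht2r : t₂ ≤ r := csSup_le hSne fun t ht => ht.1.2
  -- integrability up to t₂
  have hIt2 : IntegrableOn v (Ioc c t₂) volume := by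
    rcases eq_or_lt_of_le hct2 with heq | hlt
    · rw [← heq]; simp
    · set ν := volume.withDensity (fun x => (‖v x‖₊ : ℝ≥0∞)) with hν
      have hνapp : ∀ s : Set ℝ, MeasurableSet s → ν s = ∫⁻ y in s, (‖v y‖₊ : ℝ≥0∞) := by
        intro s hs; rw [hν, withDensity_apply _ hs]
      suffices hfin : ν (Ioc c t₂) < ⊤ by
        refine ⟨hv.aestronglyMeasurable.restrict, ?_⟩
        rw [hνapp _ measurableSet_Ioc] at hfin
        exact hfin
      set q : ℕ → ℝ := fun n => t₂ - (t₂ - c)/(n+1) with hq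
      have hqlt : ∀ n : ℕ, q n < t₂ := by
        intro n
        have : (0:ℝ) < (t₂ - c)/(n+1) := div_pos (by linarith) (by positivity)
        simp only [hq]; linarith
      have hqc : ∀ n : ℕ, c ≤ q n := by
        intro n
        have h1 : (t₂ - c)/(n+1) ≤ (t₂ - c)/1 := by
          apply div_le_div_of_nonneg_left (by linarith) one_pos
          push_cast; linarith [Nat.cast_nonneg (α := ℝ) n]
        simp only [hq]; rw [div_one] at h1; linarith
      have hqint : ∀ n : ℕ, IntegrableOn v (Ioc c (q n)) volume := by
        intro n
        obtain ⟨t', ht'S, hlt'⟩ := exists_lt_of_lt_csSup hSne (hqlt n)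
        exact ht'S.2.mono_set (Ioc_subset_Ioc_right hlt'.le)
      have hbound : ∀ n : ℕ, ν (Ioc c (q n)) ≤ ENNReal.ofReal D := by
        intro n
        rw [hνapp _ measurableSet_Ioc]
        have he : ∫⁻ y in Ioc c (q n), (‖v y‖₊ : ℝ≥0∞)
            = ENNReal.ofReal (∫ y in Ioc c (q n), |v y|) := by
          simp only [← enorm_eq_nnnorm]; rw [← ofReal_integral_norm_eq_lintegral_enorm (hqint n)]
          simp [Real.norm_eq_abs]
        rw [he]
        exact ENNReal.ofReal_le_ofReal
          (claimA1 (q n) ⟨hqc n, (hqlt n).le.trans ht2r⟩ (hqint n))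
      have hmono : Monotone fun n => Ioc c (q n) := by
        intro i j hij
        apply Ioc_subset_Ioc_right
        simp only [hq]
        have : (t₂ - c)/((j:ℝ)+1) ≤ (t₂ - c)/((i:ℝ)+1) := by
          apply div_le_div_of_nonneg_left (by linarith) (by positivity)
          push_cast; exact_mod_cast add_le_add_left (Nat.cast_le.2 hij) 1
        linarith
      have hunion : (⋃ n, Ioc c (q n)) = Ioo c t₂ := by
        apply Set.eq_of_subset_of_subset
        · refine iUnion_subset fun n x hx => ⟨hx.1, lt_of_le_of_lt hx.2 (hqlt n)⟩
        · intro x hx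
          obtain ⟨n, hn⟩ := exists_nat_gt ((t₂ - c)/(t₂ - x))
          refine mem_iUnion.2 ⟨n, hx.1, ?_⟩
          have hx2 : 0 < t₂ - x := by linarith [hx.2]
          have h1 : (t₂ - c)/(t₂ - x) < (n:ℝ) + 1 := by linarith [Nat.cast_nonneg (α := ℝ) n]
          have h2 : (t₂ - c) < ((n:ℝ)+1) * (t₂ - x) := by
            rwa [div_lt_iff₀ hx2] at h1
          have h3 : (t₂ - c)/((n:ℝ)+1) < t₂ - x := by
            rw [div_lt_iff₀ (by positivity : (0:ℝ) < (n:ℝ)+1)]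
            linarith [h2]
          simp only [hq]; linarith
      have hioo : ν (Ioo c t₂) ≤ ENNReal.ofReal D := by
        rw [← hunion, hmono.measure_iUnion]
        exact iSup_le hbound
      have hsing : ν {t₂} = 0 :=
        (withDensity_absolutelyContinuous _ _) Real.volume_singleton
      have hsub : Ioc c t₂ ⊆ Ioo c t₂ ∪ {t₂} := by
        intro x hx
        rcases eq_or_lt_of_le hx.2 with he | hl
        · exact Or.inr (by simp [he])
        · exact Or.inl ⟨hx.1, hl⟩
      calc ν (Ioc c t₂) ≤ ν (Ioo c t₂ ∪ {t₂}) := measure_mono hsub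
        _ ≤ ν (Ioo c t₂) + ν {t₂} := measure_union_le _ _
        _ ≤ ENNReal.ofReal D + 0 := add_le_add hioo (le_of_eq hsing)
        _ < ⊤ := by simp [ENNReal.ofReal_lt_top]
  -- beyond t₂ the solution collapses by junk values
  have claimA3 : ∀ x ∈ Ioc t₂ r, u x = u 0 := by
    intro x hx
    have hnotint : ¬ IntegrableOn (fun y => v y / a y) (Ioc 0 x) volume := by
      intro hcon
      have hvx : IntegrableOn v (Ioc 0 x) volume := intOn_of_div hia hle hsa hv hcon
      have hxS : x ∈ S := ⟨⟨le_trans hct2 hx.1.le, hx.2⟩,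
        hvx.mono_set (Ioc_subset_Ioc_left h0c)⟩
      exact absurd (le_csSup hSbdd hxS) (not_le.2 hx.1)
    have heu := hsol.eq_u x
    rw [intervalIntegral.integral_of_le (le_trans (le_trans h0c hct2) hx.1.le),
      integral_undef hnotint] at heu
    simpa using heu
  -- global bound for u on (c, r]
  set B := |u 0| + |u c| + ia⁻¹ * ∫ y in Ioc c t₂, |v y| with hB
  have hInn : 0 ≤ ia⁻¹ * ∫ y in Ioc c t₂, |v y| := by
    have : 0 ≤ ∫ y in Ioc c t₂, |v y| :=
      setIntegral_nonneg measurableSet_Ioc fun y _ => abs_nonneg _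
    positivity
  have hB0 : 0 ≤ B := by rw [hB]; positivity
  have hBb : ∀ x ∈ Ioc c r, |u x| ≤ B := by
    intro x hx
    by_cases hxt : x ≤ t₂
    · have := u_bound t₂ ⟨hct2, ht2r⟩ hIt2 x ⟨hx.1.le, hxt⟩
      rw [hB]; linarith [abs_nonneg (u 0)]
    · rw [claimA3 x ⟨not_le.1 hxt, hx.2⟩, hB]
      linarith [abs_nonneg (u c), hInn]
  have hvB : ∀ x ∈ Ioc c r, |v x| ≤ |v c| + B * K := fun x hx =>
    v_bound x hx B hB0 fun y hy => hBb y ⟨hy.1, le_trans hy.2 hx.2⟩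
  have hfinal : IntegrableOn v (Ioc c r) volume := by
    refine integrableOn_of_bdd measurableSet_Ioc ?_ hv hvB
    rw [Real.volume_Ioc]; exact ENNReal.ofReal_ne_top
  have he : Ioc 0 c ∪ Ioc c r = Ioc 0 r := Ioc_union_Ioc_eq_Ioc h0c hcr
  exact he ▸ hGood.union hfinal

end StepRight

section StepLeft

variable {a : ℝ → ℝ} {μp μm : Measure ℝ} {u v : ℝ → ℝ} {ia sa : ℝ}

lemma step_left
    (hsol : IsSolution0 a μp μm u v)
    (hia : 0 < ia) (hle : ∀ x, ia ≤ a x) (hsa : ∀ x, a x ≤ sa)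
    (ha : Measurable a)
    (finp : FiniteOnBounded μp) (finm : FiniteOnBounded μm)
    (c r : ℝ) (hc0 : c ≤ 0) (hrc : r ≤ c)
    (contr : (c - r) * ((μp (Ioc r c)).toReal + (μm (Ioc r c)).toReal) ≤ ia / 2)
    (hGood : IntegrableOn v (Ioc c 0) volume) :
    IntegrableOn v (Ioc r 0) volume := by
  have hv := hsol.meas_v
  have hpfin : μp (Ioc r c) ≠ ⊤ :=
    (finp _ ((Metric.isBounded_Icc r c).subset Ioc_subset_Icc_self)).ne
  have hmfin : μm (Ioc r c) ≠ ⊤ :=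
    (finm _ ((Metric.isBounded_Icc r c).subset Ioc_subset_Icc_self)).ne
  set Kp := (μp (Ioc r c)).toReal with hKp
  set Km := (μm (Ioc r c)).toReal with hKm
  set K := Kp + Km with hK
  have hK0 : 0 ≤ K := add_nonneg ENNReal.toReal_nonneg ENNReal.toReal_nonneg
  have gu : ∀ t, t ≤ 0 → IntegrableOn (fun y => v y / a y) (Ioc t 0) volume →
      u t = u 0 - ∫ y in Ioc t 0, v y / a y := by
    intro t ht _
    have := hsol.eq_u t
    rw [intervalIntegral.integral_symm, intervalIntegral.integral_of_le ht] at this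
    rw [this]; ring
  have key_u : ∀ x ∈ Icc r c, IntegrableOn v (Ioc x c) volume →
      u x = u c - ∫ y in Ioc x c, v y / a y := by
    intro x hx hvx
    have hx0 : x ≤ 0 := le_trans hx.2 hc0
    have hkx : IntegrableOn v (Ioc x 0) volume := by
      have he : Ioc x c ∪ Ioc c 0 = Ioc x 0 := Ioc_union_Ioc_eq_Ioc hx.2 hc0
      exact he ▸ hvx.union hGood
    have e1 := gu x hx0 (intOn_div hia hle ha hv hkx)
    have e2 := gu c hc0 (intOn_div hia hle ha hv hGood)
    have hsplit : ∫ y in Ioc x 0, v y / a y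
        = (∫ y in Ioc x c, v y / a y) + ∫ y in Ioc c 0, v y / a y := by
      rw [← Ioc_union_Ioc_eq_Ioc hx.2 hc0]
      exact setIntegral_union (Set.Ioc_disjoint_Ioc_of_le le_rfl) measurableSet_Ioc
        (intOn_div hia hle ha hv hvx) (intOn_div hia hle ha hv hGood)
    rw [e1, e2, hsplit]; ring
  have u_bound : ∀ t ∈ Icc r c, IntegrableOn v (Ioc t c) volume → ∀ x ∈ Icc t c,
      |u x| ≤ |u c| + ia⁻¹ * ∫ y in Ioc t c, |v y| := by
    intro t ht hvt x hx
    have hvx : IntegrableOn v (Ioc x c) volume := hvt.mono_set (Ioc_subset_Ioc_left hx.1)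
    have hxr : x ∈ Icc r c := ⟨le_trans ht.1 hx.1, hx.2⟩
    rw [key_u x hxr hvx]
    have h1 : |∫ y in Ioc x c, v y / a y| ≤ ∫ y in Ioc x c, ia⁻¹ * |v y| := by
      refine le_trans ?_ (setIntegral_mono_on (intOn_div hia hle ha hv hvx).abs
        ((hvx.abs).const_mul _) measurableSet_Ioc ?_)
      · have hni := norm_integral_le_integral_norm
          (μ := volume.restrict (Ioc x c)) (fun y => v y / a y)
        simp only [Real.norm_eq_abs] at hni
        exact hni
      · intro y _; exact norm_div_le_aux hia hle y
    have h2 : ∫ y in Ioc x c, ia⁻¹ * |v y| ≤ ∫ y in Ioc t c, ia⁻¹ * |v y| := by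
      refine setIntegral_mono_set ((hvt.abs).const_mul _) ?_ ?_
      · exact ae_restrict_of_forall_mem measurableSet_Ioc fun y _ =>
          mul_nonneg (inv_nonneg.2 hia.le) (abs_nonneg _)
      · exact HasSubset.Subset.eventuallyLE (Ioc_subset_Ioc_left hx.1)
    have h3 : ∫ y in Ioc t c, ia⁻¹ * |v y| = ia⁻¹ * ∫ y in Ioc t c, |v y| :=
      integral_const_mul _ _
    calc |u c - ∫ y in Ioc x c, v y / a y| ≤ |u c| + |∫ y in Ioc x c, v y / a y| :=
          abs_sub _ _
      _ ≤ |u c| + ia⁻¹ * ∫ y in Ioc t c, |v y| := by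
          rw [← h3]; exact add_le_add_right (h1.trans h2) _
  have v_bound : ∀ x ∈ Icc r c, ∀ B : ℝ, 0 ≤ B → (∀ y ∈ Ioc x c, |u y| ≤ B) →
      |v x| ≤ |v c| + B * K := by
    intro x hx B hB0 hB
    have hev := hsol.eq_v x c hx.2
    have hsub : Ioc x c ⊆ Ioc r c := Ioc_subset_Ioc_left hx.1
    have hpx : μp (Ioc x c) ≠ ⊤ := fun h => hpfin (eq_top_iff.2 (h ▸ measure_mono hsub))
    have hmx : μm (Ioc x c) ≠ ⊤ := fun h => hmfin (eq_top_iff.2 (h ▸ measure_mono hsub))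
    have h1 : |∫ y in Ioc x c, u y ∂μp| ≤ B * Kp := by
      refine (junk_abs_le measurableSet_Ioc hpx hB).trans ?_
      exact mul_le_mul_of_nonneg_left (toReal_measure_mono hsub hpfin) hB0
    have h2 : |∫ y in Ioc x c, u y ∂μm| ≤ B * Km := by
      refine (junk_abs_le measurableSet_Ioc hmx hB).trans ?_
      exact mul_le_mul_of_nonneg_left (toReal_measure_mono hsub hmfin) hB0
    have hx' : v x = v c - ((∫ y in Ioc x c, u y ∂μp) - ∫ y in Ioc x c, u y ∂μm) := by
      linarith [hev]
    rw [hx', hK]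
    calc |v c - ((∫ y in Ioc x c, u y ∂μp) - ∫ y in Ioc x c, u y ∂μm)|
        ≤ |v c| + (|∫ y in Ioc x c, u y ∂μp| + |∫ y in Ioc x c, u y ∂μm|) := by
          refine (abs_sub _ _).trans (add_le_add_right ?_ _)
          exact (abs_sub _ _)
      _ ≤ |v c| + (B * Kp + B * Km) := add_le_add_right (add_le_add h1 h2) _
      _ = |v c| + B * (Kp + Km) := by ring
  set D := 2 * ((c - r) * |v c| + (c - r) * K * |u c|) with hD
  have claimA1 : ∀ t ∈ Icc r c, IntegrableOn v (Ioc t c) volume →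
      (∫ y in Ioc t c, |v y|) ≤ D := by
    intro t ht hvt
    set h := ∫ y in Ioc t c, |v y| with hh
    have h_nonneg : 0 ≤ h := setIntegral_nonneg measurableSet_Ioc fun y _ => abs_nonneg _
    set M := |u c| + ia⁻¹ * h with hM
    have hM0 : 0 ≤ M := by positivity
    have hub : ∀ x ∈ Ioc t c, |u x| ≤ M := fun x hx =>
      u_bound t ht hvt x ⟨hx.1.le, hx.2⟩
    have hvb : ∀ x ∈ Ioc t c, |v x| ≤ |v c| + M * K := by
      intro x hx
      refine v_bound x ⟨le_trans ht.1 hx.1.le, hx.2⟩ M hM0 fun y hy =>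
        hub y ⟨lt_of_le_of_lt hx.1.le hy.1, hy.2⟩
    have hC0 : 0 ≤ |v c| + M * K := by positivity
    have hint : h ≤ (|v c| + M * K) * (c - r) := by
      calc h ≤ ∫ _y in Ioc t c, (|v c| + M * K) :=
            setIntegral_mono_on hvt.abs ((integrableOn_const_iff).2 (Or.inr (by
              rw [Real.volume_Ioc]; exact ENNReal.ofReal_lt_top))) measurableSet_Ioc hvb
        _ = (volume (Ioc t c)).toReal * (|v c| + M * K) := by
            rw [setIntegral_const]; rfl
        _ ≤ (c - r) * (|v c| + M * K) := by
            refine mul_le_mul_of_nonneg_right ?_ hC0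
            rw [Real.volume_Ioc, ENNReal.toReal_ofReal (by linarith [ht.2] : (0:ℝ) ≤ c - t)]
            linarith [ht.1]
        _ = (|v c| + M * K) * (c - r) := mul_comm _ _
    have contr' : (c - r) * K * ia⁻¹ ≤ 1 / 2 := by
      have h1 : (c - r) * K * ia⁻¹ ≤ (ia / 2) * ia⁻¹ :=
        mul_le_mul_of_nonneg_right contr (inv_nonneg.2 hia.le)
      have h2 : (ia / 2) * ia⁻¹ = 1 / 2 := by field_simp
      linarith
    have hrc0 : 0 ≤ c - r := by linarith
    rw [hM] at hint
    rw [hD]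
    have hint2 : (c-r)*K*ia⁻¹*h ≤ (1/2)*h := mul_le_mul_of_nonneg_right contr' h_nonneg
    have hexp : (|v c| + (|u c| + ia⁻¹ * h) * K) * (c - r)
        = (c-r)*|v c| + (c-r)*K*|u c| + (c-r)*K*ia⁻¹*h := by ring
    rw [hexp] at hint
    clear_value h M D K Kp Km
    linarith
  set S : Set ℝ := {t | t ∈ Icc r c ∧ IntegrableOn v (Ioc t c) volume} with hS
  have hcS : c ∈ S := ⟨⟨hrc, le_refl c⟩, by simp⟩
  have hSne : S.Nonempty := ⟨c, hcS⟩
  have hSbdd : BddBelow S := ⟨r, fun t ht => ht.1.1⟩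
  set t₂ := sInf S with ht₂
  have hct2 : t₂ ≤ c := csInf_le hSbdd hcS
  have ht2r : r ≤ t₂ := le_csInf hSne fun t ht => ht.1.1
  have hIt2 : IntegrableOn v (Ioc t₂ c) volume := by
    rcases eq_or_lt_of_le hct2 with heq | hlt
    · rw [heq]; simp
    · set ν := volume.withDensity (fun x => (‖v x‖₊ : ℝ≥0∞)) with hν
      have hνapp : ∀ s : Set ℝ, MeasurableSet s → ν s = ∫⁻ y in s, (‖v y‖₊ : ℝ≥0∞) := by
        intro s hs; rw [hν, withDensity_apply _ hs]
      suffices hfin : ν (Ioc t₂ c) < ⊤ by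
        refine ⟨hv.aestronglyMeasurable.restrict, ?_⟩
        rw [hνapp _ measurableSet_Ioc] at hfin
        exact hfin
      set q : ℕ → ℝ := fun n => t₂ + (c - t₂)/(n+1) with hq
      have hqlt : ∀ n : ℕ, t₂ < q n := by
        intro n
        have : (0:ℝ) < (c - t₂)/(n+1) := div_pos (by linarith) (by positivity)
        simp only [hq]; linarith
      have hqc : ∀ n : ℕ, q n ≤ c := by
        intro n
        have h1 : (c - t₂)/(n+1) ≤ (c - t₂)/1 := by
          apply div_le_div_of_nonneg_left (by linarith) one_pos
          push_cast; linarith [Nat.cast_nonneg (α := ℝ) n]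
        simp only [hq]; rw [div_one] at h1; linarith
      have hqint : ∀ n : ℕ, IntegrableOn v (Ioc (q n) c) volume := by
        intro n
        obtain ⟨t', ht'S, hlt'⟩ := exists_lt_of_csInf_lt hSne (hqlt n)
        exact ht'S.2.mono_set (Ioc_subset_Ioc_left hlt'.le)
      have hbound : ∀ n : ℕ, ν (Ioc (q n) c) ≤ ENNReal.ofReal D := by
        intro n
        rw [hνapp _ measurableSet_Ioc]
        have he : ∫⁻ y in Ioc (q n) c, (‖v y‖₊ : ℝ≥0∞)
            = ENNReal.ofReal (∫ y in Ioc (q n) c, |v y|) := by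
          simp only [← enorm_eq_nnnorm]; rw [← ofReal_integral_norm_eq_lintegral_enorm (hqint n)]
          simp [Real.norm_eq_abs]
        rw [he]
        exact ENNReal.ofReal_le_ofReal
          (claimA1 (q n) ⟨le_trans ht2r (hqlt n).le, hqc n⟩ (hqint n))
      have hmono : Monotone fun n => Ioc (q n) c := by
        intro i j hij
        apply Ioc_subset_Ioc_left
        simp only [hq]
        have : (c - t₂)/((j:ℝ)+1) ≤ (c - t₂)/((i:ℝ)+1) := by
          apply div_le_div_of_nonneg_left (by linarith) (by positivity)
          push_cast; exact_mod_cast add_le_add_left (Nat.cast_le.2 hij) 1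
        linarith
      have hunion : (⋃ n, Ioc (q n) c) = Ioc t₂ c := by
        apply Set.eq_of_subset_of_subset
        · exact iUnion_subset fun n x hx => ⟨lt_trans (hqlt n) hx.1, hx.2⟩
        · intro x hx
          obtain ⟨n, hn⟩ := exists_nat_gt ((c - t₂)/(x - t₂))
          refine mem_iUnion.2 ⟨n, ?_, hx.2⟩
          have hx2 : 0 < x - t₂ := by linarith [hx.1]
          have h1 : (c - t₂)/(x - t₂) < (n:ℝ) + 1 := by linarith [Nat.cast_nonneg (α := ℝ) n]
          have h2 : (c - t₂) < ((n:ℝ)+1) * (x - t₂) := by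
            rwa [div_lt_iff₀ hx2] at h1
          have h3 : (c - t₂)/((n:ℝ)+1) < x - t₂ := by
            rw [div_lt_iff₀ (by positivity : (0:ℝ) < (n:ℝ)+1)]
            linarith [h2]
          simp only [hq]; linarith
      have hioc : ν (Ioc t₂ c) ≤ ENNReal.ofReal D := by
        rw [← hunion, hmono.measure_iUnion]
        exact iSup_le hbound
      exact lt_of_le_of_lt hioc (by simp [ENNReal.ofReal_lt_top])
  have claimA3 : ∀ x ∈ Ico r t₂, u x = u 0 := by
    intro x hx
    have hx0 : x ≤ 0 := by
      have : x < t₂ := hx.2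
      linarith [hct2, hc0]
    have hnotint : ¬ IntegrableOn (fun y => v y / a y) (Ioc x 0) volume := by
      intro hcon
      have hvx : IntegrableOn v (Ioc x 0) volume := intOn_of_div hia hle hsa hv hcon
      have hxS : x ∈ S := ⟨⟨hx.1, le_trans hx.2.le hct2⟩,
        hvx.mono_set (Ioc_subset_Ioc_right hc0)⟩
      exact absurd (csInf_le hSbdd hxS) (not_le.2 hx.2)
    have heu := hsol.eq_u x
    rw [intervalIntegral.integral_symm, intervalIntegral.integral_of_le hx0,
      integral_undef hnotint] at heu
    simpa using heu
  set B := |u 0| + |u c| + ia⁻¹ * ∫ y in Ioc t₂ c, |v y| with hB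
  have hInn : 0 ≤ ia⁻¹ * ∫ y in Ioc t₂ c, |v y| := by
    have : 0 ≤ ∫ y in Ioc t₂ c, |v y| :=
      setIntegral_nonneg measurableSet_Ioc fun y _ => abs_nonneg _
    positivity
  have hB0 : 0 ≤ B := by rw [hB]; positivity
  have hBb : ∀ x ∈ Ioc r c, |u x| ≤ B := by
    intro x hx
    by_cases hxt : t₂ ≤ x
    · have := u_bound t₂ ⟨ht2r, hct2⟩ hIt2 x ⟨hxt, hx.2⟩
      rw [hB]; linarith [abs_nonneg (u 0)]
    · rw [claimA3 x ⟨hx.1.le, not_le.1 hxt⟩, hB]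
      linarith [abs_nonneg (u c), hInn]
  have hvB : ∀ x ∈ Ioc r c, |v x| ≤ |v c| + B * K := fun x hx =>
    v_bound x ⟨hx.1.le, hx.2⟩ B hB0 fun y hy => hBb y ⟨lt_of_le_of_lt hx.1.le hy.1, hy.2⟩
  have hfinal : IntegrableOn v (Ioc r c) volume := by
    refine integrableOn_of_bdd measurableSet_Ioc ?_ hv hvB
    rw [Real.volume_Ioc]; exact ENNReal.ofReal_ne_top
  have he : Ioc r c ∪ Ioc c 0 = Ioc r 0 := Ioc_union_Ioc_eq_Ioc hrc hc0
  exact he ▸ hfinal.union hGood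

end StepLeft

section Glob

variable {a : ℝ → ℝ} {μp μm : Measure ℝ} {u v : ℝ → ℝ} {ia sa : ℝ}

lemma glob_right (hsol : IsSolution0 a μp μm u v)
    (hia : 0 < ia) (hle : ∀ x, ia ≤ a x) (hsa : ∀ x, a x ≤ sa) (ha : Measurable a)
    (finp : FiniteOnBounded μp) (finm : FiniteOnBounded μm)
    (T : ℝ) (hT : 0 ≤ T) : IntegrableOn v (Ioc 0 T) volume := by
  set E := {x : ℝ | x ∈ Icc 0 T ∧ IntegrableOn v (Ioc 0 x) volume} with hE
  have h0E : (0:ℝ) ∈ E := ⟨⟨le_refl 0, hT⟩, by simp⟩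
  have hEne : E.Nonempty := ⟨0, h0E⟩
  have hEbdd : BddAbove E := ⟨T, fun x hx => hx.1.2⟩
  set R := sSup E with hR
  have h0R : 0 ≤ R := le_csSup hEbdd h0E
  have hRT : R ≤ T := csSup_le hEne fun x hx => hx.1.2
  have hKfin : ∀ c d : ℝ, (μp (Ioc c d)).toReal + (μm (Ioc c d)).toReal ≥ 0 :=
    fun c d => add_nonneg ENNReal.toReal_nonneg ENNReal.toReal_nonneg
  -- contraction estimate helper
  have contr_help : ∀ c r w1 w2 : ℝ, w1 ≤ c → r ≤ w2 → c ≤ r →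
      r - c ≤ (ia/2) / ((μp (Ioc w1 w2)).toReal + (μm (Ioc w1 w2)).toReal + 1) →
      (r - c) * ((μp (Ioc c r)).toReal + (μm (Ioc c r)).toReal) ≤ ia / 2 := by
    intro c r w1 w2 hw1 hw2 hcr hrc
    set K1 := (μp (Ioc w1 w2)).toReal + (μm (Ioc w1 w2)).toReal with hK1
    have hK10 : 0 ≤ K1 := hKfin w1 w2
    have hpfin : μp (Ioc w1 w2) ≠ ⊤ :=
      (finp _ ((Metric.isBounded_Icc w1 w2).subset Ioc_subset_Icc_self)).ne
    have hmfin : μm (Ioc w1 w2) ≠ ⊤ :=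
      (finm _ ((Metric.isBounded_Icc w1 w2).subset Ioc_subset_Icc_self)).ne
    have hsub : Ioc c r ⊆ Ioc w1 w2 := Ioc_subset_Ioc hw1 hw2
    have hKle : (μp (Ioc c r)).toReal + (μm (Ioc c r)).toReal ≤ K1 + 1 := by
      have := add_le_add (toReal_measure_mono hsub hpfin) (toReal_measure_mono hsub hmfin)
      rw [hK1]; linarith
    calc (r - c) * ((μp (Ioc c r)).toReal + (μm (Ioc c r)).toReal)
        ≤ ((ia/2) / (K1 + 1)) * (K1 + 1) := by
          apply mul_le_mul hrc hKle (hKfin c r) (by positivity)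
      _ = ia / 2 := div_mul_cancel₀ _ (by positivity)
  have hIR : IntegrableOn v (Ioc 0 R) volume := by
    set K1 := (μp (Ioc (R-1) (R+1))).toReal + (μm (Ioc (R-1) (R+1))).toReal with hK1
    set δ := min 1 ((ia/2) / (K1 + 1)) with hδ
    have hδ0 : 0 < δ := lt_min one_pos (by positivity)
    obtain ⟨c, hcE, hc⟩ := exists_lt_of_lt_csSup hEne (by linarith : R - δ < R)
    have hcR : c ≤ R := le_csSup hEbdd hcE
    refine step_right hsol hia hle hsa ha finp finm c R hcE.1.1 hcR ?_ hcE.2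
    refine contr_help c R (R-1) (R+1) ?_ (by linarith) hcR ?_
    · have : δ ≤ 1 := min_le_left _ _
      linarith
    · have : δ ≤ (ia/2)/(K1+1) := min_le_right _ _
      rw [← hK1]; linarith
  rcases eq_or_lt_of_le hRT with heq | hlt
  · rwa [heq] at hIR
  · exfalso
    set K2 := (μp (Ioc R (R+1))).toReal + (μm (Ioc R (R+1))).toReal with hK2
    set δ2 := min 1 ((ia/2) / (K2 + 1)) with hδ2
    have hδ20 : 0 < δ2 := lt_min one_pos (by positivity)
    set r' := min T (R + δ2) with hr'
    have hRr' : R < r' := lt_min hlt (by linarith)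
    have hr'T : r' ≤ T := min_le_left _ _
    have hIr' : IntegrableOn v (Ioc 0 r') volume := by
      refine step_right hsol hia hle hsa ha finp finm R r' h0R hRr'.le ?_ hIR
      refine contr_help R r' R (R+1) (le_refl R) ?_ hRr'.le ?_
      · have h1 : r' ≤ R + δ2 := min_le_right _ _
        have h2 : δ2 ≤ 1 := min_le_left _ _
        linarith
      · have h1 : r' ≤ R + δ2 := min_le_right _ _
        have h2 : δ2 ≤ (ia/2)/(K2+1) := min_le_right _ _
        rw [← hK2]; linarith
    have : r' ∈ E := ⟨⟨le_trans h0R hRr'.le, hr'T⟩, hIr'⟩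
    exact absurd (le_csSup hEbdd this) (not_le.2 hRr')

lemma glob_left (hsol : IsSolution0 a μp μm u v)
    (hia : 0 < ia) (hle : ∀ x, ia ≤ a x) (hsa : ∀ x, a x ≤ sa) (ha : Measurable a)
    (finp : FiniteOnBounded μp) (finm : FiniteOnBounded μm)
    (T : ℝ) (hT : T ≤ 0) : IntegrableOn v (Ioc T 0) volume := by
  set E := {x : ℝ | x ∈ Icc T 0 ∧ IntegrableOn v (Ioc x 0) volume} with hE
  have h0E : (0:ℝ) ∈ E := ⟨⟨hT, le_refl 0⟩, by simp⟩
  have hEne : E.Nonempty := ⟨0, h0E⟩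
  have hEbdd : BddBelow E := ⟨T, fun x hx => hx.1.1⟩
  set R := sInf E with hR
  have h0R : R ≤ 0 := csInf_le hEbdd h0E
  have hRT : T ≤ R := le_csInf hEne fun x hx => hx.1.1
  have hKfin : ∀ c d : ℝ, (μp (Ioc c d)).toReal + (μm (Ioc c d)).toReal ≥ 0 :=
    fun c d => add_nonneg ENNReal.toReal_nonneg ENNReal.toReal_nonneg
  have contr_help : ∀ r c w1 w2 : ℝ, w1 ≤ r → c ≤ w2 → r ≤ c →
      c - r ≤ (ia/2) / ((μp (Ioc w1 w2)).toReal + (μm (Ioc w1 w2)).toReal + 1) →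
      (c - r) * ((μp (Ioc r c)).toReal + (μm (Ioc r c)).toReal) ≤ ia / 2 := by
    intro r c w1 w2 hw1 hw2 hcr hrc
    set K1 := (μp (Ioc w1 w2)).toReal + (μm (Ioc w1 w2)).toReal with hK1
    have hK10 : 0 ≤ K1 := hKfin w1 w2
    have hpfin : μp (Ioc w1 w2) ≠ ⊤ :=
      (finp _ ((Metric.isBounded_Icc w1 w2).subset Ioc_subset_Icc_self)).ne
    have hmfin : μm (Ioc w1 w2) ≠ ⊤ :=
      (finm _ ((Metric.isBounded_Icc w1 w2).subset Ioc_subset_Icc_self)).ne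
    have hsub : Ioc r c ⊆ Ioc w1 w2 := Ioc_subset_Ioc hw1 hw2
    have hKle : (μp (Ioc r c)).toReal + (μm (Ioc r c)).toReal ≤ K1 + 1 := by
      have := add_le_add (toReal_measure_mono hsub hpfin) (toReal_measure_mono hsub hmfin)
      rw [hK1]; linarith
    calc (c - r) * ((μp (Ioc r c)).toReal + (μm (Ioc r c)).toReal)
        ≤ ((ia/2) / (K1 + 1)) * (K1 + 1) := by
          apply mul_le_mul hrc hKle (hKfin r c) (by positivity)
      _ = ia / 2 := div_mul_cancel₀ _ (by positivity)
  have hIR : IntegrableOn v (Ioc R 0) volume := by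
    set K1 := (μp (Ioc (R-1) (R+1))).toReal + (μm (Ioc (R-1) (R+1))).toReal with hK1
    set δ := min 1 ((ia/2) / (K1 + 1)) with hδ
    have hδ0 : 0 < δ := lt_min one_pos (by positivity)
    obtain ⟨c, hcE, hc⟩ := exists_lt_of_csInf_lt hEne (by linarith : R < R + δ)
    have hcR : R ≤ c := csInf_le hEbdd hcE
    refine step_left hsol hia hle hsa ha finp finm c R hcE.1.2 hcR ?_ hcE.2
    refine contr_help R c (R-1) (R+1) (by linarith) ?_ hcR ?_
    · have : δ ≤ 1 := min_le_left _ _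
      linarith
    · have : δ ≤ (ia/2)/(K1+1) := min_le_right _ _
      rw [← hK1]; linarith
  rcases eq_or_lt_of_le hRT with heq | hlt
  · rwa [← heq] at hIR
  · exfalso
    set K2 := (μp (Ioc (R-1) R)).toReal + (μm (Ioc (R-1) R)).toReal with hK2
    set δ2 := min 1 ((ia/2) / (K2 + 1)) with hδ2
    have hδ20 : 0 < δ2 := lt_min one_pos (by positivity)
    set r' := max T (R - δ2) with hr'
    have hRr' : r' < R := max_lt hlt (by linarith)
    have hr'T : T ≤ r' := le_max_left _ _
    have hIr' : IntegrableOn v (Ioc r' 0) volume := by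
      refine step_left hsol hia hle hsa ha finp finm R r' h0R hRr'.le ?_ hIR
      refine contr_help r' R (R-1) R ?_ (le_refl R) hRr'.le ?_
      · have h1 : R - δ2 ≤ r' := le_max_right _ _
        have h2 : δ2 ≤ 1 := min_le_left _ _
        linarith
      · have h1 : R - δ2 ≤ r' := le_max_right _ _
        have h2 : δ2 ≤ (ia/2)/(K2+1) := min_le_right _ _
        rw [← hK2]; linarith
    have : r' ∈ E := ⟨⟨hr'T, le_trans hRr'.le h0R⟩, hIr'⟩
    exact absurd (csInf_le hEbdd this) (not_le.2 hRr')

lemma v_locint (hsol : IsSolution0 a μp μm u v)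
    (hia : 0 < ia) (hle : ∀ x, ia ≤ a x) (hsa : ∀ x, a x ≤ sa) (ha : Measurable a)
    (finp : FiniteOnBounded μp) (finm : FiniteOnBounded μm)
    (c d : ℝ) : IntegrableOn v (Ioc c d) volume := by
  have hL := glob_left hsol hia hle hsa ha finp finm (min c 0) (min_le_right c 0)
  have hRg := glob_right hsol hia hle hsa ha finp finm (max d 0) (le_max_right d 0)
  have hsub : Ioc c d ⊆ Ioc (min c 0) 0 ∪ Ioc 0 (max d 0) := by
    intro x hx
    rcases le_or_gt x 0 with hx0 | hx0
    · exact Or.inl ⟨lt_of_le_of_lt (min_le_left c 0) hx.1, hx0⟩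
    · exact Or.inr ⟨hx0, le_trans hx.2 (le_max_left d 0)⟩
  exact (hL.union hRg).mono_set hsub

end Glob

section Conv

variable {a : ℝ → ℝ} {μp μm : Measure ℝ} {u v : ℝ → ℝ} {ia sa : ℝ}

lemma u_eq_gen (hsol : IsSolution0 a μp μm u v)
    (hia : 0 < ia) (hle : ∀ x, ia ≤ a x) (hsa : ∀ x, a x ≤ sa) (ha : Measurable a)
    (finp : FiniteOnBounded μp) (finm : FiniteOnBounded μm)
    (c x : ℝ) (hcx : c ≤ x) :
    u x = u c + ∫ y in Ioc c x, v y / a y := by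
  have hint : ∀ p q : ℝ, IntervalIntegrable (fun y => v y / a y) volume p q := by
    intro p q
    constructor
    · exact intOn_div hia hle ha hsol.meas_v (v_locint hsol hia hle hsa ha finp finm p q)
    · exact intOn_div hia hle ha hsol.meas_v (v_locint hsol hia hle hsa ha finp finm q p)
  have hadd := intervalIntegral.integral_add_adjacent_intervals (a := 0) (b := c) (c := x)
    (f := fun y => v y / a y) (μ := volume) (hint 0 c) (hint c x)
  have e1 := hsol.eq_u x
  have e2 := hsol.eq_u c
  rw [← hadd] at e1
  rw [e1, e2, intervalIntegral.integral_of_le hcx]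
  ring

lemma u_bdd_gen (hsol : IsSolution0 a μp μm u v)
    (hia : 0 < ia) (hle : ∀ x, ia ≤ a x) (hsa : ∀ x, a x ≤ sa) (ha : Measurable a)
    (finp : FiniteOnBounded μp) (finm : FiniteOnBounded μm)
    (c d : ℝ) :
    ∀ x ∈ Icc c d, |u x| ≤ |u c| + ia⁻¹ * ∫ y in Ioc c d, |v y| := by
  intro x hx
  have hvx := v_locint hsol hia hle hsa ha finp finm c x
  have hvt := v_locint hsol hia hle hsa ha finp finm c d
  rw [u_eq_gen hsol hia hle hsa ha finp finm c x hx.1]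
  have h1 : |∫ y in Ioc c x, v y / a y| ≤ ∫ y in Ioc c x, ia⁻¹ * |v y| := by
    refine le_trans ?_ (setIntegral_mono_on (intOn_div hia hle ha hsol.meas_v hvx).abs
      ((hvx.abs).const_mul _) measurableSet_Ioc ?_)
    · have hni := norm_integral_le_integral_norm
        (μ := volume.restrict (Ioc c x)) (fun y => v y / a y)
      simp only [Real.norm_eq_abs] at hni
      exact hni
    · intro y _; exact norm_div_le_aux hia hle y
  have h2 : ∫ y in Ioc c x, ia⁻¹ * |v y| ≤ ∫ y in Ioc c d, ia⁻¹ * |v y| := by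
    refine setIntegral_mono_set ((hvt.abs).const_mul _) ?_ ?_
    · exact ae_restrict_of_forall_mem measurableSet_Ioc fun y _ =>
        mul_nonneg (inv_nonneg.2 hia.le) (abs_nonneg _)
    · exact HasSubset.Subset.eventuallyLE (Ioc_subset_Ioc_right hx.2)
  have h3 : ∫ y in Ioc c d, ia⁻¹ * |v y| = ia⁻¹ * ∫ y in Ioc c d, |v y| :=
    integral_const_mul _ _
  calc |u c + ∫ y in Ioc c x, v y / a y| ≤ |u c| + |∫ y in Ioc c x, v y / a y| :=
        abs_add_le _ _
    _ ≤ |u c| + ia⁻¹ * ∫ y in Ioc c d, |v y| := by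
        rw [← h3]; exact add_le_add_right (h1.trans h2) _

lemma v_bdd_gen (hsol : IsSolution0 a μp μm u v)
    (hia : 0 < ia) (hle : ∀ x, ia ≤ a x) (hsa : ∀ x, a x ≤ sa) (ha : Measurable a)
    (finp : FiniteOnBounded μp) (finm : FiniteOnBounded μm)
    (c d : ℝ) :
    ∃ B : ℝ, 0 ≤ B ∧ ∀ x ∈ Icc c d, |v x| ≤ B := by
  have hpfin : μp (Ioc c d) ≠ ⊤ :=
    (finp _ ((Metric.isBounded_Icc c d).subset Ioc_subset_Icc_self)).ne
  have hmfin : μm (Ioc c d) ≠ ⊤ :=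
    (finm _ ((Metric.isBounded_Icc c d).subset Ioc_subset_Icc_self)).ne
  set Bu := |u c| + ia⁻¹ * ∫ y in Ioc c d, |v y| with hBu
  have hBu0 : 0 ≤ Bu := by
    have : 0 ≤ ∫ y in Ioc c d, |v y| :=
      setIntegral_nonneg measurableSet_Ioc fun y _ => abs_nonneg _
    rw [hBu]; positivity
  refine ⟨|v c| + Bu * ((μp (Ioc c d)).toReal + (μm (Ioc c d)).toReal), by positivity, ?_⟩
  intro x hx
  have hub : ∀ y ∈ Ioc c x, |u y| ≤ Bu := fun y hy =>
    u_bdd_gen hsol hia hle hsa ha finp finm c d y ⟨hy.1.le, le_trans hy.2 hx.2⟩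
  have hev := hsol.eq_v c x hx.1
  have hsub : Ioc c x ⊆ Ioc c d := Ioc_subset_Ioc_right hx.2
  have hpx : μp (Ioc c x) ≠ ⊤ := fun h => hpfin (eq_top_iff.2 (h ▸ measure_mono hsub))
  have hmx : μm (Ioc c x) ≠ ⊤ := fun h => hmfin (eq_top_iff.2 (h ▸ measure_mono hsub))
  have h1 : |∫ y in Ioc c x, u y ∂μp| ≤ Bu * (μp (Ioc c d)).toReal := by
    refine (junk_abs_le measurableSet_Ioc hpx hub).trans ?_
    exact mul_le_mul_of_nonneg_left (toReal_measure_mono hsub hpfin) hBu0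
  have h2 : |∫ y in Ioc c x, u y ∂μm| ≤ Bu * (μm (Ioc c d)).toReal := by
    refine (junk_abs_le measurableSet_Ioc hmx hub).trans ?_
    exact mul_le_mul_of_nonneg_left (toReal_measure_mono hsub hmfin) hBu0
  have hx' : v x = v c + ((∫ y in Ioc c x, u y ∂μp) - ∫ y in Ioc c x, u y ∂μm) := by
    linarith [hev]
  rw [hx']
  calc |v c + ((∫ y in Ioc c x, u y ∂μp) - ∫ y in Ioc c x, u y ∂μm)|
      ≤ |v c| + (|∫ y in Ioc c x, u y ∂μp| + |∫ y in Ioc c x, u y ∂μm|) :=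
        (abs_add_le _ _).trans (add_le_add_right (abs_sub _ _) _)
    _ ≤ |v c| + Bu * ((μp (Ioc c d)).toReal + (μm (Ioc c d)).toReal) := by
        have := add_le_add h1 h2
        linarith [this]

end Conv

section Fubini

lemma fubini_piece (μ : Measure ℝ) (c d : ℝ) (hcd : c ≤ d) (hμ : μ (Ioc c d) ≠ ⊤)
    (g w : ℝ → ℝ) (hg : IntegrableOn g (Ioc c d) volume) (hw : IntegrableOn w (Ioc c d) μ) :
    ((∫ x in Ioc c d, (∫ y in Ioc c x, g y) * w x ∂μ)
      = ∫ y in Ioc c d, g y * (∫ x in Ioc y d, w x ∂μ))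
    ∧ IntegrableOn (fun y => g y * (∫ x in Ioc y d, w x ∂μ)) (Ioc c d) volume
    ∧ IntegrableOn (fun x => (∫ y in Ioc c x, g y) * w x) (Ioc c d) μ := by
  set ν := μ.restrict (Ioc c d) with hν
  set lam := volume.restrict (Ioc c d) with hlam
  haveI : IsFiniteMeasure ν := ⟨by rw [hν, Measure.restrict_apply_univ]; exact hμ.lt_top⟩
  set s : Set (ℝ × ℝ) := {p : ℝ × ℝ | p.2 < p.1} with hsdef
  have hs : MeasurableSet s := measurableSet_lt measurable_snd measurable_fst
  set F : ℝ × ℝ → ℝ := s.indicator (fun p => w p.1 * g p.2) with hF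
  have hFint : Integrable F (ν.prod lam) := (Integrable.mul_prod hw hg).indicator hs
  have hinner1 : ∀ x ∈ Ioc c d, (∫ y, F (x, y) ∂lam) = (∫ y in Ioc c x, g y) * w x := by
    intro x hx
    have h1 : (fun y => F (x, y)) = (Iio x).indicator (fun y => w x * g y) := by
      funext y
      simp only [hF, hsdef, Set.indicator, mem_setOf_eq, mem_Iio]
    rw [h1, integral_indicator measurableSet_Iio, hlam,
      Measure.restrict_restrict measurableSet_Iio]
    have h2 : Iio x ∩ Ioc c d = Ioo c x := by
      ext y
      simp only [mem_inter_iff, mem_Iio, mem_Ioc, mem_Ioo]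
      constructor
      · rintro ⟨h1', h2', _⟩; exact ⟨h2', h1'⟩
      · rintro ⟨h1', h2'⟩; exact ⟨h2', h1', le_trans h2'.le hx.2⟩
    rw [h2, integral_const_mul, ← integral_Ioc_eq_integral_Ioo]
    ring
  have hinner2 : ∀ y ∈ Ioc c d, (∫ x, F (x, y) ∂ν) = g y * (∫ x in Ioc y d, w x ∂μ) := by
    intro y hy
    have h1 : (fun x => F (x, y)) = (Ioi y).indicator (fun x => w x * g y) := by
      funext x
      simp only [hF, hsdef, Set.indicator, mem_setOf_eq, mem_Ioi]
    rw [h1, integral_indicator measurableSet_Ioi, hν,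
      Measure.restrict_restrict measurableSet_Ioi]
    have h2 : Ioi y ∩ Ioc c d = Ioc y d := by
      ext x
      simp only [mem_inter_iff, mem_Ioi, mem_Ioc]
      constructor
      · rintro ⟨h1', _, h3'⟩; exact ⟨h1', h3'⟩
      · rintro ⟨h1', h2'⟩; exact ⟨h1', lt_trans hy.1 h1', h2'⟩
    rw [h2, integral_mul_const]
    ring
  have hswap : ∫ x, (∫ y, F (x, y) ∂lam) ∂ν = ∫ y, (∫ x, F (x, y) ∂ν) ∂lam := by
    refine MeasureTheory.integral_integral_swap ?_
    exact hFint
  refine ⟨?_, ?_, ?_⟩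
  · calc ∫ x in Ioc c d, (∫ y in Ioc c x, g y) * w x ∂μ
        = ∫ x, (∫ y, F (x, y) ∂lam) ∂ν :=
          (setIntegral_congr_fun measurableSet_Ioc fun x hx => (hinner1 x hx).symm)
      _ = ∫ y, (∫ x, F (x, y) ∂ν) ∂lam := hswap
      _ = ∫ y in Ioc c d, g y * (∫ x in Ioc y d, w x ∂μ) :=
          setIntegral_congr_fun measurableSet_Ioc fun y hy => hinner2 y hy
  · have h1 : Integrable (fun y => ∫ x, F (x, y) ∂ν) lam := hFint.integral_prod_right
    exact h1.congr (ae_restrict_of_forall_mem measurableSet_Ioc fun y hy => hinner2 y hy)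
  · have h1 : Integrable (fun x => ∫ y, F (x, y) ∂lam) ν := hFint.integral_prod_left
    exact h1.congr (ae_restrict_of_forall_mem measurableSet_Ioc fun x hx => hinner1 x hx)

lemma prod_rule (μ1 μ2 : Measure ℝ) (c d : ℝ) (hcd : c ≤ d)
    (hμ1 : μ1 (Ioc c d) ≠ ⊤) (hμ2 : μ2 (Ioc c d) ≠ ⊤)
    (f g h w : ℝ → ℝ)
    (hg : IntegrableOn g (Ioc c d) volume)
    (hf : ∀ x ∈ Icc c d, f x = f c + ∫ y in Ioc c x, g y)
    (hw1 : IntegrableOn w (Ioc c d) μ1) (hw2 : IntegrableOn w (Ioc c d) μ2)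
    (hh : ∀ x ∈ Icc c d, h x - h c = (∫ y in Ioc c x, w y ∂μ1) - (∫ y in Ioc c x, w y ∂μ2))
    (hhm : AEStronglyMeasurable h (volume.restrict (Ioc c d))) (Ch : ℝ)
    (hhb : ∀ x ∈ Icc c d, |h x| ≤ Ch)
    (hfm1 : AEStronglyMeasurable f (μ1.restrict (Ioc c d)))
    (hfm2 : AEStronglyMeasurable f (μ2.restrict (Ioc c d))) (Cf : ℝ)
    (hfb : ∀ x ∈ Icc c d, |f x| ≤ Cf) :
    f d * h d - f c * h c
      = (∫ y in Ioc c d, g y * h y)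
        + ((∫ x in Ioc c d, f x * w x ∂μ1) - (∫ x in Ioc c d, f x * w x ∂μ2)) := by
  have main : ∀ (μ : Measure ℝ), μ (Ioc c d) ≠ ⊤ → IntegrableOn w (Ioc c d) μ →
      AEStronglyMeasurable f (μ.restrict (Ioc c d)) →
      (∫ x in Ioc c d, f x * w x ∂μ)
        = f c * (∫ x in Ioc c d, w x ∂μ)
          + ∫ y in Ioc c d, g y * (∫ x in Ioc y d, w x ∂μ) := by
    intro μ hμ hw hfm
    obtain ⟨heq, _hint2, hint3⟩ := fubini_piece μ c d hcd hμ g w hg hw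
    have hsplit : ∫ x in Ioc c d, f x * w x ∂μ
        = (∫ x in Ioc c d, f c * w x ∂μ) + ∫ x in Ioc c d, (∫ y in Ioc c x, g y) * w x ∂μ := by
      rw [← integral_add (hw.const_mul (f c)) hint3]
      refine setIntegral_congr_fun measurableSet_Ioc fun x hx => ?_
      rw [hf x ⟨hx.1.le, hx.2⟩]; ring
    rw [hsplit, heq, integral_const_mul]
  have main1 := main μ1 hμ1 hw1 hfm1
  have main2 := main μ2 hμ2 hw2 hfm2
  obtain ⟨_, hQ1int, _⟩ := fubini_piece μ1 c d hcd hμ1 g w hg hw1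
  obtain ⟨_, hQ2int, _⟩ := fubini_piece μ2 c d hcd hμ2 g w hg hw2
  have hQ : ∀ (μ : Measure ℝ), IntegrableOn w (Ioc c d) μ → ∀ y ∈ Ioc c d,
      (∫ x in Ioc y d, w x ∂μ) = (∫ x in Ioc c d, w x ∂μ) - ∫ x in Ioc c y, w x ∂μ := by
    intro μ hw y hy
    have hdis : Disjoint (Ioc c y) (Ioc y d) := (Set.Ioc_disjoint_Ioc_of_le le_rfl)
    have hun : Ioc c y ∪ Ioc y d = Ioc c d := Ioc_union_Ioc_eq_Ioc hy.1.le hy.2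
    have hadd := setIntegral_union hdis measurableSet_Ioc
      (hw.mono_set (by rw [← hun]; exact subset_union_left))
      (hw.mono_set (by rw [← hun]; exact subset_union_right))
    rw [hun] at hadd
    linarith [hadd]
  have hgh : IntegrableOn (fun y => g y * h y) (Ioc c d) volume := by
    refine Integrable.mono' (g := fun y => Ch * |g y|) ((hg.abs).const_mul _)
      (hg.aestronglyMeasurable.mul hhm) ?_
    refine ae_restrict_of_forall_mem measurableSet_Ioc fun y hy => ?_
    show ‖g y * h y‖ ≤ Ch * |g y|
    rw [Real.norm_eq_abs, abs_mul, mul_comm Ch]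
    exact mul_le_mul_of_nonneg_left (hhb y ⟨hy.1.le, hy.2⟩) (abs_nonneg _)
  have hfd : ∫ y in Ioc c d, g y = f d - f c := by
    have := hf d ⟨hcd, le_refl d⟩; linarith
  have hdW : h d - h c = (∫ y in Ioc c d, w y ∂μ1) - (∫ y in Ioc c d, w y ∂μ2) :=
    hh d ⟨hcd, le_refl d⟩
  have hBQ : (∫ y in Ioc c d, g y * h y)
      + ((∫ y in Ioc c d, g y * (∫ x in Ioc y d, w x ∂μ1))
        - (∫ y in Ioc c d, g y * (∫ x in Ioc y d, w x ∂μ2)))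
      = h d * (f d - f c) := by
    have hsub := integral_sub hQ1int hQ2int
    have hsum := integral_add hgh (hQ1int.sub hQ2int)
    simp only [Pi.sub_apply] at hsub hsum
    rw [← hsub, ← hsum]
    have hEq : EqOn
        (fun y => g y * h y + (g y * (∫ x in Ioc y d, w x ∂μ1)
          - g y * (∫ x in Ioc y d, w x ∂μ2)))
        (fun y => g y * h d) (Ioc c d) := by
      intro y hy
      have e1 := hh y ⟨hy.1.le, hy.2⟩
      have e2 := hQ μ1 hw1 y hy
      have e3 := hQ μ2 hw2 y hy
      have e5 : h y + ((∫ x in Ioc y d, w x ∂μ1) - (∫ x in Ioc y d, w x ∂μ2)) = h d := by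
        rw [e2, e3]; linarith [e1, hdW]
      show g y * h y + (g y * (∫ x in Ioc y d, w x ∂μ1)
          - g y * (∫ x in Ioc y d, w x ∂μ2)) = g y * h d
      rw [← e5]; ring
    rw [setIntegral_congr_fun measurableSet_Ioc hEq, integral_mul_const, hfd]
    ring
  have hfc : f c * ((∫ y in Ioc c d, w y ∂μ1) - (∫ y in Ioc c d, w y ∂μ2))
      = f c * (h d - h c) := by rw [← hdW]
  rw [main1, main2]
  nlinarith [hBQ, hfc]

end Fubini

/-- Constancy of the Wronskian: the determinant of the transfer matrix equals 1. -/
theorem wronskian_eq_one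
    (ρ : MeasureTheory.Measure ℝ) (hρ0 : ρ ≠ 0) (hρfin : unifE ρ < ⊤)
    (hρper : ∃ p : ℝ, IsPeriod ρ p)
    (a : ℝ → ℝ) (μp μm : MeasureTheory.Measure ℝ) (hAM : AM ρ a μp μm)
    (s : ℝ) (uN vN uD vD : ℝ → ℝ)
    (hN : IsSolution0 a μp μm uN vN) (hD : IsSolution0 a μp μm uD vD)
    (huN : uN s = 1) (hvN : vN s = 0) (huD : uD s = 0) (hvD : vD s = 1) :
    ∀ t : ℝ, uN t * vD t - uD t * vN t = 1 := by
  have hameas := hAM.meas_a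
  have finp := hAM.finp
  have finm := hAM.finm
  set ia := ⨅ x, a x with hia_def
  have hia : 0 < ia := hAM.inf_pos
  have hle : ∀ x, ia ≤ a x := a_low hAM.inf_pos
  set sa := sSup (Set.range a) with hsa_def
  have hsa : ∀ x, a x ≤ sa := fun x => le_csSup hAM.bddAbove ⟨x, rfl⟩
  have key : ∀ c d : ℝ, c ≤ d →
      uN d * vD d - uD d * vN d = uN c * vD c - uD c * vN c := by
    intro c d hcd
    have hpfin : μp (Ioc c d) ≠ ⊤ :=
      (finp _ ((Metric.isBounded_Icc c d).subset Ioc_subset_Icc_self)).ne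
    have hmfin : μm (Ioc c d) ≠ ⊤ :=
      (finm _ ((Metric.isBounded_Icc c d).subset Ioc_subset_Icc_self)).ne
    obtain ⟨CN, _, hCN⟩ := v_bdd_gen hN hia hle hsa hameas finp finm c d
    obtain ⟨CD, _, hCD⟩ := v_bdd_gen hD hia hle hsa hameas finp finm c d
    set BuN := |uN c| + ia⁻¹ * ∫ y in Ioc c d, |vN y| with hBuN
    set BuD := |uD c| + ia⁻¹ * ∫ y in Ioc c d, |vD y| with hBuD
    have hBN : ∀ x ∈ Icc c d, |uN x| ≤ BuN :=
      u_bdd_gen hN hia hle hsa hameas finp finm c d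
    have hBD : ∀ x ∈ Icc c d, |uD x| ≤ BuD :=
      u_bdd_gen hD hia hle hsa hameas finp finm c d
    have huD1 : IntegrableOn uD (Ioc c d) μp :=
      integrableOn_of_bdd measurableSet_Ioc hpfin hD.meas_u
        (fun x hx => hBD x ⟨hx.1.le, hx.2⟩)
    have huD2 : IntegrableOn uD (Ioc c d) μm :=
      integrableOn_of_bdd measurableSet_Ioc hmfin hD.meas_u
        (fun x hx => hBD x ⟨hx.1.le, hx.2⟩)
    have huN1 : IntegrableOn uN (Ioc c d) μp :=
      integrableOn_of_bdd measurableSet_Ioc hpfin hN.meas_u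
        (fun x hx => hBN x ⟨hx.1.le, hx.2⟩)
    have huN2 : IntegrableOn uN (Ioc c d) μm :=
      integrableOn_of_bdd measurableSet_Ioc hmfin hN.meas_u
        (fun x hx => hBN x ⟨hx.1.le, hx.2⟩)
    have hgN : IntegrableOn (fun y => vN y / a y) (Ioc c d) volume :=
      intOn_div hia hle hameas hN.meas_v (v_locint hN hia hle hsa hameas finp finm c d)
    have hgD : IntegrableOn (fun y => vD y / a y) (Ioc c d) volume :=
      intOn_div hia hle hameas hD.meas_v (v_locint hD hia hle hsa hameas finp finm c d)
    have e1 := prod_rule μp μm c d hcd hpfin hmfin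
      uN (fun y => vN y / a y) vD uD hgN
      (fun x hx => u_eq_gen hN hia hle hsa hameas finp finm c x hx.1)
      huD1 huD2
      (fun x hx => hD.eq_v c x hx.1)
      hD.meas_v.aestronglyMeasurable CD hCD
      hN.meas_u.aestronglyMeasurable hN.meas_u.aestronglyMeasurable BuN hBN
    have e2 := prod_rule μp μm c d hcd hpfin hmfin
      uD (fun y => vD y / a y) vN uN hgD
      (fun x hx => u_eq_gen hD hia hle hsa hameas finp finm c x hx.1)
      huN1 huN2
      (fun x hx => hN.eq_v c x hx.1)
      hN.meas_v.aestronglyMeasurable CN hCN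
      hD.meas_u.aestronglyMeasurable hD.meas_u.aestronglyMeasurable BuD hBD
    have hsame1 : ∫ y in Ioc c d, (vN y / a y) * vD y
        = ∫ y in Ioc c d, (vD y / a y) * vN y :=
      setIntegral_congr_fun measurableSet_Ioc fun y _ => by ring
    have h21 : ∫ x in Ioc c d, uD x * uN x ∂μp = ∫ x in Ioc c d, uN x * uD x ∂μp :=
      setIntegral_congr_fun measurableSet_Ioc fun x _ => mul_comm _ _
    have h22 : ∫ x in Ioc c d, uD x * uN x ∂μm = ∫ x in Ioc c d, uN x * uD x ∂μm :=
      setIntegral_congr_fun measurableSet_Ioc fun x _ => mul_comm _ _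
    linarith [e1, e2, hsame1, h21, h22]
  intro t
  rcases le_total s t with h | h
  · rw [key s t h, huN, hvN, huD, hvD]; ring
  · rw [← key t s h, huN, hvN, huD, hvD]; ring
end AuxWron
end
end

section
/- Unit-interval bound for the primitive via the Wasserstein-type seminorm: Let μ be a real local measure on ℝ with ‖μ‖_unif < ∞, and let c₀ ∈ ℝ satisfy |c₀| ≤ ‖μ‖_unif and ∫_{−1}^{1} |φ_μ(s) − c₀| ds ≤ 2 ‖μ‖_{[−1,1]}. Then for all integers α ≤ −1 and β ≥ 1 and every integer k with α ≤ k ≤ β − 1: ∫_k^{k+1} |φ_μ(s) − c₀| ds ≤ 2·max{k+1, −k}·‖μ‖_{[α,β]}. -/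
open MeasureTheory Set Filter

noncomputable section

/-! ### Auxiliary lemmas -/

lemma FiniteOnBounded.ioc {ν : MeasureTheory.Measure ℝ} (hν : FiniteOnBounded ν) (a b : ℝ) :
    ν (Set.Ioc a b) < ⊤ := hν _ (Metric.isBounded_Ioc _ _)

lemma FiniteOnBounded.icc {ν : MeasureTheory.Measure ℝ} (hν : FiniteOnBounded ν) (a b : ℝ) :
    ν (Set.Icc a b) < ⊤ := hν _ (Metric.isBounded_Icc _ _)

/-- Monotone "primitive" of a single nonnegative locally finite measure. -/
def monoPrim (ν : MeasureTheory.Measure ℝ) : ℝ → ℝ :=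
  fun s => if 0 ≤ s then (ν (Set.Ioc 0 s)).toReal else -(ν (Set.Ioc s 0)).toReal

lemma monoPrim_mono {ν : MeasureTheory.Measure ℝ} (hν : FiniteOnBounded ν) :
    Monotone (monoPrim ν) := by
  intro s t hst
  unfold monoPrim
  rcases le_or_gt 0 s with hs | hs
  · rw [if_pos hs, if_pos (hs.trans hst)]
    exact ENNReal.toReal_mono (hν.ioc 0 t).ne (measure_mono (Set.Ioc_subset_Ioc_right hst))
  · rw [if_neg (not_le.2 hs)]
    rcases le_or_gt 0 t with ht | ht
    · rw [if_pos ht]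
      exact le_trans (neg_nonpos.2 ENNReal.toReal_nonneg) ENNReal.toReal_nonneg
    · rw [if_neg (not_le.2 ht)]
      exact neg_le_neg
        (ENNReal.toReal_mono (hν.ioc s 0).ne (measure_mono (Set.Ioc_subset_Ioc_left hst)))

lemma phiLM_eq_sub (μp μm : MeasureTheory.Measure ℝ) (s : ℝ) :
    phiLM μp μm s = monoPrim μp s - monoPrim μm s := by
  unfold phiLM monoPrim lmVal
  rcases le_or_gt 0 s with hs | hs
  · rw [if_pos hs, if_pos hs, if_pos hs]
  · rw [if_neg (not_le.2 hs), if_neg (not_le.2 hs), if_neg (not_le.2 hs)]; ring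

lemma phiLM_measurable {μp μm : MeasureTheory.Measure ℝ} (hp : FiniteOnBounded μp)
    (hm : FiniteOnBounded μm) : Measurable (phiLM μp μm) := by
  have : phiLM μp μm = fun s => monoPrim μp s - monoPrim μm s := funext (phiLM_eq_sub μp μm)
  rw [this]
  exact ((monoPrim_mono hp).measurable).sub ((monoPrim_mono hm).measurable)

lemma phiLM_intervalIntegrable {μp μm : MeasureTheory.Measure ℝ} (hp : FiniteOnBounded μp)
    (hm : FiniteOnBounded μm) (a b : ℝ) :
    IntervalIntegrable (phiLM μp μm) MeasureTheory.volume a b := by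
  have : phiLM μp μm = fun s => monoPrim μp s - monoPrim μm s := funext (phiLM_eq_sub μp μm)
  rw [this]
  exact ((monoPrim_mono hp).intervalIntegrable).sub ((monoPrim_mono hm).intervalIntegrable)

lemma toReal_ioc_add {ν : MeasureTheory.Measure ℝ} (hν : FiniteOnBounded ν) {a b c : ℝ}
    (hab : a ≤ b) (hbc : b ≤ c) :
    (ν (Set.Ioc a c)).toReal = (ν (Set.Ioc a b)).toReal + (ν (Set.Ioc b c)).toReal := by
  rw [← Set.Ioc_union_Ioc_eq_Ioc hab hbc,
    measure_union ((Set.Ioc_disjoint_Ioc_of_le le_rfl)) measurableSet_Ioc,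
    ENNReal.toReal_add (hν.ioc a b).ne (hν.ioc b c).ne]

lemma phiLM_diff {μp μm : MeasureTheory.Measure ℝ} (hp : FiniteOnBounded μp)
    (hm : FiniteOnBounded μm) {t s : ℝ} (hts : t ≤ s) :
    phiLM μp μm s - phiLM μp μm t = lmVal μp μm (Set.Ioc t s) := by
  unfold phiLM lmVal
  rcases le_or_gt 0 t with ht | ht
  · rw [if_pos ht, if_pos (ht.trans hts)]
    rw [toReal_ioc_add hp ht hts, toReal_ioc_add hm ht hts]; ring
  · rw [if_neg (not_le.2 ht)]
    rcases le_or_gt 0 s with hs | hs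
    · rw [if_pos hs]
      rw [show Set.Ioc t s = Set.Ioc t 0 ∪ Set.Ioc 0 s from
        (Set.Ioc_union_Ioc_eq_Ioc ht.le hs).symm,
        measure_union ((Set.Ioc_disjoint_Ioc_of_le le_rfl)) measurableSet_Ioc,
        measure_union ((Set.Ioc_disjoint_Ioc_of_le le_rfl)) measurableSet_Ioc,
        ENNReal.toReal_add (hp.ioc t 0).ne (hp.ioc 0 s).ne,
        ENNReal.toReal_add (hm.ioc t 0).ne (hm.ioc 0 s).ne]
      ring
    · rw [if_neg (not_le.2 hs)]
      rw [toReal_ioc_add hp hts hs.le, toReal_ioc_add hm hts hs.le]; ring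
/-! ### wNorm lemmas -/

lemma lmInt_zero_zero (w : ℝ → ℝ) : lmInt 0 0 w = 0 := by
  unfold lmInt; simp

/-- The defining set of the Wasserstein-type seminorm against the zero measure. -/
def wSet (μp μm : MeasureTheory.Measure ℝ) (I : Set ℝ) : Set ℝ :=
  {r : ℝ | ∃ w : ℝ → ℝ, LipschitzWith 1 w ∧ HasCompactSupport w ∧
    tsupport w ⊆ I ∧ Metric.diam (tsupport w) ≤ 2 ∧
    r = |lmInt μp μm w - lmInt 0 0 w|}

lemma wNorm_eq (μp μm : MeasureTheory.Measure ℝ) (I : Set ℝ) :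
    wNorm μp μm 0 0 I = sSup (wSet μp μm I) := rfl

lemma zero_mem_wSet (μp μm : MeasureTheory.Measure ℝ) (I : Set ℝ) :
    (0 : ℝ) ∈ wSet μp μm I := by
  refine ⟨0, (LipschitzWith.const (0 : ℝ)).weaken zero_le_one, ?_, ?_, ?_, ?_⟩
  · simp [HasCompactSupport, tsupport]
  · simp [tsupport]
  · simp [tsupport]
  · unfold lmInt; simp

/-- Uniform bound on `|∫ w dμ|` for admissible test functions. -/
lemma abs_lmInt_le {μp μm : MeasureTheory.Measure ℝ} (hp : FiniteOnBounded μp)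
    (hm : FiniteOnBounded μm) (hunif : unifE (μp + μm) < ⊤)
    (w : ℝ → ℝ) (hlip : LipschitzWith 1 w) (hcs : HasCompactSupport w)
    (hdiam : Metric.diam (tsupport w) ≤ 2) :
    |lmInt μp μm w| ≤ 25 * (unifE (μp + μm)).toReal := by
  rcases Set.eq_empty_or_nonempty (tsupport w) with he | ⟨x₀, hx₀⟩
  · have hw : w = 0 := by
      funext x
      exact image_eq_zero_of_notMem_tsupport (by rw [he]; exact Set.notMem_empty x)
    rw [hw]
    have h0 : lmInt μp μm 0 = 0 := by unfold lmInt; simp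
    rw [h0, abs_zero]
    positivity
  · have hsub : tsupport w ⊆ Set.Icc (x₀ - 2) (x₀ + 2) := by
      intro y hy
      have := Metric.dist_le_diam_of_mem hcs.isBounded hy hx₀
      have hd : |y - x₀| ≤ 2 := by
        rw [Real.dist_eq] at this; linarith
      rw [abs_le] at hd
      constructor <;> [linarith [hd.1]; linarith [hd.2]]
    have hw5 : ∀ x, |w x| ≤ 5 := by
      intro x
      rcases em (x ∈ tsupport w) with hx | hx
      · have h3 : (x₀ + 3) ∉ tsupport w := by
          intro hmem
          have := (hsub hmem).2; linarith
        have h0 : w (x₀ + 3) = 0 := image_eq_zero_of_notMem_tsupport h3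
        have hd := hlip.dist_le_mul x (x₀ + 3)
        rw [Real.dist_eq, Real.dist_eq, h0, sub_zero] at hd
        have hx2 := hsub hx
        have h1 : |w x| ≤ |x - (x₀ + 3)| := by simpa using hd
        have h2 : |x - (x₀ + 3)| ≤ 5 :=
          abs_le.2 ⟨by linarith [hx2.1], by linarith [hx2.2]⟩
        linarith
      · rw [image_eq_zero_of_notMem_tsupport hx]; norm_num
    -- integral bounds
    have hwcont : Continuous w := hlip.continuous
    set J : Set ℝ := Set.Icc (x₀ - 2) (x₀ + 2) with hJ
    have hzero : ∀ x, x ∉ J → w x = 0 := fun x hx =>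
      image_eq_zero_of_notMem_tsupport (fun hmem => hx (hsub hmem))
    have key : ∀ ν : MeasureTheory.Measure ℝ, FiniteOnBounded ν →
        |∫ x, w x ∂ν| ≤ 5 * (ν J).toReal := by
      intro ν hν
      have h1 : ∫ x, w x ∂ν = ∫ x in J, w x ∂ν := by
        rw [← MeasureTheory.integral_indicator measurableSet_Icc]
        congr 1; funext x
        by_cases hx : x ∈ J
        · rw [hJ] at hx; simp [Set.indicator_of_mem hx]
        · rw [hJ] at hx; simp [Set.indicator_of_notMem hx, hzero x hx]
      rw [h1]
      have := MeasureTheory.norm_setIntegral_le_of_norm_le_const (μ := ν) (s := J) (C := 5)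
        (f := w) (hν.icc _ _) (fun x _ => by simpa using hw5 x)
      simpa [Real.norm_eq_abs, mul_comm, MeasureTheory.measureReal_def] using this
    -- measure of J bound
    have hcover : (μp + μm) J ≤ 5 * unifE (μp + μm) := by
      have hsub2 : J ⊆ Set.Ioc (x₀ - 3) (x₀ + 2) := by
        intro y hy; exact ⟨by linarith [hy.1], hy.2⟩
      have h5 : Set.Ioc (x₀ - 3) (x₀ + 2) =
          Set.Ioc (x₀ - 3) (x₀ - 2) ∪ Set.Ioc (x₀ - 2) (x₀ - 1) ∪ Set.Ioc (x₀ - 1) x₀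
          ∪ Set.Ioc x₀ (x₀ + 1) ∪ Set.Ioc (x₀ + 1) (x₀ + 2) := by
        rw [Set.Ioc_union_Ioc_eq_Ioc (by linarith) (by linarith),
          Set.Ioc_union_Ioc_eq_Ioc (by linarith) (by linarith),
          Set.Ioc_union_Ioc_eq_Ioc (by linarith) (by linarith),
          Set.Ioc_union_Ioc_eq_Ioc (by linarith) (by linarith)]
      have hpiece : ∀ t : ℝ, (μp + μm) (Set.Ioc t (t + 1)) ≤ unifE (μp + μm) :=
        fun t => le_iSup (fun t => (μp + μm) (Set.Ioc t (t + 1))) t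
      calc (μp + μm) J ≤ (μp + μm) (Set.Ioc (x₀ - 3) (x₀ + 2)) := measure_mono hsub2
        _ ≤ (μp + μm) (Set.Ioc (x₀ - 3) (x₀ - 2)) + (μp + μm) (Set.Ioc (x₀ - 2) (x₀ - 1))
            + (μp + μm) (Set.Ioc (x₀ - 1) x₀) + (μp + μm) (Set.Ioc x₀ (x₀ + 1))
            + (μp + μm) (Set.Ioc (x₀ + 1) (x₀ + 2)) := by
          rw [h5]
          refine le_trans (measure_union_le _ _) ?_
          gcongr
          refine le_trans (measure_union_le _ _) ?_
          gcongr
          refine le_trans (measure_union_le _ _) ?_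
          gcongr
          exact measure_union_le _ _
        _ ≤ 5 * unifE (μp + μm) := by
          have h1 := hpiece (x₀ - 3)
          have h2 := hpiece (x₀ - 2)
          have h3 := hpiece (x₀ - 1)
          have h4 := hpiece x₀
          have h5' := hpiece (x₀ + 1)
          rw [show x₀ - 3 + 1 = x₀ - 2 by ring] at h1
          rw [show x₀ - 2 + 1 = x₀ - 1 by ring] at h2
          rw [show x₀ - 1 + 1 = x₀ by ring] at h3
          rw [show x₀ + 1 + 1 = x₀ + 2 by ring] at h5'
          rw [show (5 : ENNReal) = 1 + 1 + 1 + 1 + 1 by norm_num, add_mul, add_mul, add_mul,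
            add_mul, one_mul]
          gcongr
    have hJreal : ((μp + μm) J).toReal ≤ 5 * (unifE (μp + μm)).toReal := by
      have := ENNReal.toReal_mono (by finiteness) hcover
      rwa [ENNReal.toReal_mul, show ((5 : ENNReal)).toReal = 5 by norm_num] at this
    have hsum : ((μp + μm) J).toReal = (μp J).toReal + (μm J).toReal := by
      rw [MeasureTheory.Measure.add_apply, ENNReal.toReal_add (hp.icc _ _).ne (hm.icc _ _).ne]
    have hkp := key μp hp
    have hkm := key μm hm
    unfold lmInt
    calc |(∫ x, w x ∂μp) - ∫ x, w x ∂μm| ≤ |∫ x, w x ∂μp| + |∫ x, w x ∂μm| := abs_sub _ _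
      _ ≤ 5 * (μp J).toReal + 5 * (μm J).toReal := add_le_add hkp hkm
      _ = 5 * ((μp + μm) J).toReal := by rw [hsum]; ring
      _ ≤ 5 * (5 * (unifE (μp + μm)).toReal) := by
          have := mul_le_mul_of_nonneg_left hJreal (by norm_num : (0:ℝ) ≤ 5)
          linarith
      _ = 25 * (unifE (μp + μm)).toReal := by ring

lemma wSet_bddAbove {μp μm : MeasureTheory.Measure ℝ} (hp : FiniteOnBounded μp)
    (hm : FiniteOnBounded μm) (hunif : unifE (μp + μm) < ⊤) (I : Set ℝ) :
    BddAbove (wSet μp μm I) := by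
  refine ⟨25 * (unifE (μp + μm)).toReal, ?_⟩
  rintro r ⟨w, hlip, hcs, _, hdiam, rfl⟩
  rw [lmInt_zero_zero, sub_zero]
  exact abs_lmInt_le hp hm hunif w hlip hcs hdiam

lemma wNorm_nonneg' {μp μm : MeasureTheory.Measure ℝ} (hp : FiniteOnBounded μp)
    (hm : FiniteOnBounded μm) (hunif : unifE (μp + μm) < ⊤) (I : Set ℝ) :
    0 ≤ wNorm μp μm 0 0 I := by
  rw [wNorm_eq]
  exact le_csSup (wSet_bddAbove hp hm hunif I) (zero_mem_wSet μp μm I)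

lemma le_wNorm {μp μm : MeasureTheory.Measure ℝ} (hp : FiniteOnBounded μp)
    (hm : FiniteOnBounded μm) (hunif : unifE (μp + μm) < ⊤) {I : Set ℝ}
    (w : ℝ → ℝ) (hlip : LipschitzWith 1 w) (hcs : HasCompactSupport w)
    (hsub : tsupport w ⊆ I) (hdiam : Metric.diam (tsupport w) ≤ 2) :
    |lmInt μp μm w| ≤ wNorm μp μm 0 0 I := by
  rw [wNorm_eq]
  refine le_csSup (wSet_bddAbove hp hm hunif I) ⟨w, hlip, hcs, hsub, hdiam, ?_⟩
  rw [lmInt_zero_zero, sub_zero]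

lemma wNorm_mono {μp μm : MeasureTheory.Measure ℝ} (hp : FiniteOnBounded μp)
    (hm : FiniteOnBounded μm) (hunif : unifE (μp + μm) < ⊤) {I J : Set ℝ} (hIJ : I ⊆ J) :
    wNorm μp μm 0 0 I ≤ wNorm μp μm 0 0 J := by
  rw [wNorm_eq, wNorm_eq]
  refine csSup_le_csSup (wSet_bddAbove hp hm hunif J) ⟨0, zero_mem_wSet μp μm I⟩ ?_
  rintro r ⟨w, hlip, hcs, hsubI, hdiam, rfl⟩
  exact ⟨w, hlip, hcs, hsubI.trans hIJ, hdiam, rfl⟩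
/-! ### Core estimate -/

lemma intervalIntegrable_of_bdd {f : ℝ → ℝ} (hf : Measurable f) {C : ℝ}
    (hC : ∀ x, |f x| ≤ C) (a b : ℝ) : IntervalIntegrable f MeasureTheory.volume a b := by
  rw [intervalIntegrable_iff]
  refine MeasureTheory.Measure.integrableOn_of_bounded ?_ hf.aestronglyMeasurable
    (MeasureTheory.ae_of_all _ fun x => by simpa using hC x)
  rw [Set.uIoc, Real.volume_Ioc]
  exact ENNReal.ofReal_ne_top

lemma core_estimate {μp μm : MeasureTheory.Measure ℝ} (hp : FiniteOnBounded μp)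
    (hm : FiniteOnBounded μm) (hunif : unifE (μp + μm) < ⊤)
    (c α β a : ℝ) (h : ℝ → ℝ) (hhm : Measurable h) (hh1 : ∀ s, |h s| ≤ 1)
    (hh0 : (∫ s in a..(a + 2), h s) = 0) (hαa : α ≤ a) (haβ : a + 2 ≤ β) :
    |∫ s in a..(a + 2), h s * (phiLM μp μm s - c)| ≤ wNorm μp μm 0 0 (Set.Icc α β) := by
  set φ := phiLM μp μm with hφ
  set J : Set ℝ := Set.Ioc a (a + 2) with hJdef
  have hJmeas : MeasurableSet J := measurableSet_Ioc
  have hJvol : MeasureTheory.volume J < ⊤ := by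
    rw [hJdef, Real.volume_Ioc]; exact ENNReal.ofReal_lt_top
  haveI hfinvol : MeasureTheory.IsFiniteMeasure (MeasureTheory.volume.restrict J) :=
    ⟨by rw [MeasureTheory.Measure.restrict_apply_univ]; exact hJvol⟩
  set cl : ℝ → ℝ := fun x => max a (min x (a + 2)) with hcl
  set W : ℝ → ℝ := fun x => ∫ s in a..(cl x), h s with hW
  have hIIh : ∀ u v : ℝ, IntervalIntegrable h MeasureTheory.volume u v :=
    fun u v => intervalIntegrable_of_bdd hhm hh1 u v
  -- W is 1-Lipschitz
  have hlip : LipschitzWith 1 W := by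
    rw [lipschitzWith_iff_dist_le_mul]
    intro x y
    have hsub : W x - W y = ∫ s in (cl y)..(cl x), h s := by
      show (∫ s in a..(cl x), h s) - (∫ s in a..(cl y), h s) = _
      exact intervalIntegral.integral_interval_sub_left (hIIh a (cl x)) (hIIh a (cl y))
    have hclip : |cl x - cl y| ≤ |x - y| := by
      rw [hcl]
      simp only
      rw [max_comm a (min x (a+2)), max_comm a (min y (a+2))]
      refine le_trans (abs_max_sub_max_le_abs _ _ _) ?_
      refine le_trans (abs_min_sub_min_le_max x (a+2) y (a+2)) ?_
      simp
    have hb : ‖∫ s in (cl y)..(cl x), h s‖ ≤ 1 * |cl x - cl y| := by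
      refine intervalIntegral.norm_integral_le_of_norm_le_const fun s _ => ?_
      rw [Real.norm_eq_abs]; exact hh1 s
    rw [Real.dist_eq, Real.dist_eq, hsub]
    calc |∫ s in (cl y)..(cl x), h s| ≤ 1 * |cl x - cl y| := hb
      _ ≤ |x - y| := by rw [one_mul]; exact hclip
      _ = ↑(1 : NNReal) * |x - y| := by norm_num
  -- W vanishes outside J
  have hW0 : ∀ x, x ∉ J → W x = 0 := by
    intro x hx
    rw [hJdef, Set.mem_Ioc, not_and_or, not_lt, not_le] at hx
    rcases hx with hx | hx
    · have hclx : cl x = a := by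
        rw [hcl]; simp only
        rw [min_eq_left (by linarith), max_eq_left hx]
      rw [hW]; simp only [hclx]
      exact intervalIntegral.integral_same
    · have hclx : cl x = a + 2 := by
        rw [hcl]; simp only
        rw [min_eq_right hx.le, max_eq_right (by linarith)]
      rw [hW]; simp only [hclx]
      exact hh0
  have hsupp : tsupport W ⊆ Set.Icc a (a + 2) := by
    refine closure_minimal ?_ isClosed_Icc
    intro x hx
    by_contra hxn
    exact (Function.mem_support.1 hx)
      (hW0 x fun hmem => hxn (Set.Ioc_subset_Icc_self hmem))
  have hcs : HasCompactSupport W :=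
    HasCompactSupport.intro isCompact_Icc
      (fun x hxn => hW0 x fun hmem => hxn (Set.Ioc_subset_Icc_self hmem))
  have hdiam : Metric.diam (tsupport W) ≤ 2 := by
    refine le_trans (Metric.diam_mono hsupp (Metric.isBounded_Icc _ _)) ?_
    rw [Real.diam_Icc (by linarith : a ≤ a + 2)]
    norm_num
  -- Fubini computation
  have key : ∀ ν : MeasureTheory.Measure ℝ, FiniteOnBounded ν →
      ∫ x, W x ∂ν = ∫ s in J, h s * (ν (Set.Ioc s (a + 2))).toReal := by
    intro ν hν
    haveI : MeasureTheory.IsFiniteMeasure (ν.restrict J) :=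
      ⟨by rw [MeasureTheory.Measure.restrict_apply_univ]
          exact hν _ (Metric.isBounded_Ioc _ _)⟩
    have h1 : ∫ x, W x ∂ν = ∫ x in J, W x ∂ν := by
      rw [← MeasureTheory.integral_indicator hJmeas]
      congr 1; funext x
      by_cases hx : x ∈ J
      · rw [Set.indicator_of_mem hx]
      · rw [Set.indicator_of_notMem hx, hW0 x hx]
    have h2 : Set.EqOn W (fun x => ∫ s in J, (Set.Iio x).indicator h s) J := by
      intro x hx
      have hclx : cl x = x := by
        rw [hcl]; simp only
        rw [min_eq_left hx.2, max_eq_right hx.1.le]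
      have hJx : J ∩ Set.Iio x = Set.Ioo a x := by
        ext y
        simp only [hJdef, Set.mem_inter_iff, Set.mem_Ioc, Set.mem_Iio, Set.mem_Ioo]
        constructor
        · rintro ⟨⟨hy1, _⟩, hy3⟩; exact ⟨hy1, hy3⟩
        · rintro ⟨hy1, hy2⟩; exact ⟨⟨hy1, le_trans hy2.le hx.2⟩, hy2⟩
      show W x = _
      rw [hW]; simp only [hclx]
      rw [MeasureTheory.setIntegral_indicator measurableSet_Iio, hJx,
        intervalIntegral.integral_of_le hx.1.le, MeasureTheory.integral_Ioc_eq_integral_Ioo]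
    have hswap : ∫ x in J, (∫ s in J, (Set.Iio x).indicator h s) ∂ν
        = ∫ s in J, (∫ x in J, (Set.Iio x).indicator h s ∂ν) := by
      apply MeasureTheory.integral_integral_swap
      have hmeas2 : Measurable (Function.uncurry fun (x s : ℝ) => (Set.Iio x).indicator h s) := by
        have heq : (Function.uncurry fun (x s : ℝ) => (Set.Iio x).indicator h s)
            = Set.indicator {p : ℝ × ℝ | p.2 < p.1} (fun p => h p.2) := by
          funext p
          rcases p with ⟨x, s⟩
          simp only [Function.uncurry, Set.indicator, Set.mem_Iio, Set.mem_setOf_eq]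
        rw [heq]
        exact (hhm.comp measurable_snd).indicator
          (measurableSet_lt measurable_snd measurable_fst)
      refine MeasureTheory.Integrable.mono' (MeasureTheory.integrable_const 1)
        hmeas2.aestronglyMeasurable (MeasureTheory.ae_of_all _ ?_)
      rintro ⟨x, s⟩
      simp only [Function.uncurry]
      rw [Real.norm_eq_abs]
      by_cases hxs : s ∈ Set.Iio x
      · rw [Set.indicator_of_mem hxs]; exact hh1 s
      · rw [Set.indicator_of_notMem hxs]; simp
    have h4 : Set.EqOn (fun s => ∫ x in J, (Set.Iio x).indicator h s ∂ν)
        (fun s => h s * (ν (Set.Ioc s (a + 2))).toReal) J := by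
      intro s hs
      have hfun : ∀ x : ℝ, (Set.Iio x).indicator h s = (Set.Ioi s).indicator (fun _ => h s) x := by
        intro x
        by_cases hxs : s < x
        · rw [Set.indicator_of_mem (Set.mem_Iio.2 hxs), Set.indicator_of_mem (Set.mem_Ioi.2 hxs)]
        · rw [Set.indicator_of_notMem (by simpa using hxs),
            Set.indicator_of_notMem (by simpa using hxs)]
      have hJs : J ∩ Set.Ioi s = Set.Ioc s (a + 2) := by
        ext y
        simp only [hJdef, Set.mem_inter_iff, Set.mem_Ioc, Set.mem_Ioi]
        constructor
        · rintro ⟨⟨_, hy2⟩, hy3⟩; exact ⟨hy3, hy2⟩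
        · rintro ⟨hy1, hy2⟩; exact ⟨⟨lt_trans hs.1 hy1, hy2⟩, hy1⟩
      show (∫ x in J, (Set.Iio x).indicator h s ∂ν) = _
      simp only [hfun]
      rw [MeasureTheory.setIntegral_indicator measurableSet_Ioi, hJs,
        MeasureTheory.setIntegral_const, smul_eq_mul, mul_comm, MeasureTheory.measureReal_def]
    calc ∫ x, W x ∂ν = ∫ x in J, W x ∂ν := h1
      _ = ∫ x in J, (∫ s in J, (Set.Iio x).indicator h s) ∂ν :=
          MeasureTheory.setIntegral_congr_fun hJmeas h2
      _ = ∫ s in J, (∫ x in J, (Set.Iio x).indicator h s ∂ν) := hswap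
      _ = ∫ s in J, h s * (ν (Set.Ioc s (a + 2))).toReal :=
          MeasureTheory.setIntegral_congr_fun hJmeas h4
  -- integrability of the integrands
  have hmeasν : ∀ ν : MeasureTheory.Measure ℝ, FiniteOnBounded ν →
      Measurable (fun s => (ν (Set.Ioc s (a + 2))).toReal) := by
    intro ν hν
    apply Antitone.measurable
    intro s t hst
    exact ENNReal.toReal_mono (hν.ioc _ _).ne (measure_mono (Set.Ioc_subset_Ioc_left hst))
  have hIν : ∀ ν : MeasureTheory.Measure ℝ, FiniteOnBounded ν →
      MeasureTheory.IntegrableOn (fun s => h s * (ν (Set.Ioc s (a + 2))).toReal) J := by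
    intro ν hν
    refine MeasureTheory.Measure.integrableOn_of_bounded hJvol.ne
      ((hhm.mul (hmeasν ν hν)).aestronglyMeasurable) (M := (ν J).toReal) ?_
    rw [MeasureTheory.ae_restrict_iff' hJmeas]
    refine MeasureTheory.ae_of_all _ fun s hs => ?_
    rw [Real.norm_eq_abs, abs_mul, abs_of_nonneg (ENNReal.toReal_nonneg)]
    have h1 : (ν (Set.Ioc s (a + 2))).toReal ≤ (ν J).toReal :=
      ENNReal.toReal_mono (hν _ (Metric.isBounded_Ioc _ _)).ne
        (measure_mono (Set.Ioc_subset_Ioc_left hs.1.le))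
    calc |h s| * (ν (Set.Ioc s (a + 2))).toReal ≤ 1 * (ν J).toReal :=
          mul_le_mul (hh1 s) h1 ENNReal.toReal_nonneg zero_le_one
      _ = (ν J).toReal := one_mul _
  have hcomb : lmInt μp μm W = ∫ s in J, h s * (φ (a + 2) - φ s) := by
    unfold lmInt
    rw [key μp hp, key μm hm, ← MeasureTheory.integral_sub (hIν μp hp) (hIν μm hm)]
    refine MeasureTheory.setIntegral_congr_fun hJmeas fun s hs => ?_
    have hd : φ (a + 2) - φ s = lmVal μp μm (Set.Ioc s (a + 2)) := phiLM_diff hp hm hs.2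
    have : lmVal μp μm (Set.Ioc s (a + 2))
        = (μp (Set.Ioc s (a + 2))).toReal - (μm (Set.Ioc s (a + 2))).toReal := rfl
    rw [← mul_sub, ← this, ← hd]
  have hφint : MeasureTheory.IntegrableOn (fun s => φ s - c) J := by
    have := (phiLM_intervalIntegrable hp hm a (a + 2)).sub
      (intervalIntegrable_const (c := c))
    exact this.1
  have hIφ : MeasureTheory.IntegrableOn (fun s => h s * (φ s - c)) J :=
    hφint.bdd_mul hhm.aestronglyMeasurable (MeasureTheory.ae_of_all _ fun x => by simpa using hh1 x)
  have hIc : MeasureTheory.IntegrableOn (fun s => h s * (φ (a + 2) - c)) J :=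
    (MeasureTheory.integrable_const (φ (a + 2) - c)).bdd_mul hhm.aestronglyMeasurable
      (MeasureTheory.ae_of_all _ fun x => by simpa using hh1 x)
  have hsplit : ∫ s in J, h s * (φ (a + 2) - φ s)
      = (∫ s in J, h s * (φ (a + 2) - c)) - ∫ s in J, h s * (φ s - c) := by
    rw [← MeasureTheory.integral_sub hIc hIφ]
    refine MeasureTheory.setIntegral_congr_fun hJmeas fun s _ => ?_
    ring
  have hconst : ∫ s in J, h s * (φ (a + 2) - c) = (φ (a + 2) - c) * ∫ s in J, h s := by
    simp_rw [mul_comm (h _) (φ (a + 2) - c)]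
    exact MeasureTheory.integral_const_mul _ _
  have hint0 : ∫ s in J, h s = 0 := by
    rw [hJdef, ← intervalIntegral.integral_of_le (by linarith : a ≤ a + 2)]
    exact hh0
  have hfinal : lmInt μp μm W = -(∫ s in a..(a + 2), h s * (φ s - c)) := by
    rw [hcomb, hsplit, hconst, hint0, mul_zero, zero_sub]
    congr 1
    rw [intervalIntegral.integral_of_le (by linarith : a ≤ a + 2)]
  have hle := le_wNorm hp hm hunif W hlip hcs
    (hsupp.trans (Set.Icc_subset_Icc hαa haβ)) hdiam
  rw [hfinal, abs_neg] at hle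
  exact hle
/-! ### Step lemmas -/

lemma intervalIntegrable_bdd_mul {f g : ℝ → ℝ} {a b : ℝ}
    (hg : IntervalIntegrable g MeasureTheory.volume a b) (hf : Measurable f) {C : ℝ}
    (hC : ∀ x, |f x| ≤ C) :
    IntervalIntegrable (fun x => f x * g x) MeasureTheory.volume a b := by
  rw [intervalIntegrable_iff] at hg ⊢
  exact hg.bdd_mul hf.aestronglyMeasurable (MeasureTheory.ae_of_all _ fun x => by simpa using hC x)

section Steps

variable {μp μm : MeasureTheory.Measure ℝ}

lemma step_forward (hp : FiniteOnBounded μp) (hm : FiniteOnBounded μm)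
    (hunif : unifE (μp + μm) < ⊤) (c α β k : ℝ) (hαk : α ≤ k - 1) (hkβ : k + 1 ≤ β) :
    (∫ s in k..(k + 1), |phiLM μp μm s - c|) ≤
      (∫ s in (k - 1)..k, |phiLM μp μm s - c|) + wNorm μp μm 0 0 (Set.Icc α β) := by
  set φ := phiLM μp μm with hφdef
  set σ : ℝ → ℝ := fun s => if 0 ≤ φ s - c then 1 else -1 with hσdef
  have hσm : Measurable σ :=
    Measurable.ite
      (measurableSet_le measurable_const ((phiLM_measurable hp hm).sub measurable_const))
      measurable_const measurable_const
  have hσ1 : ∀ s, |σ s| ≤ 1 := by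
    intro s; rw [hσdef]; dsimp only; split <;> norm_num
  have haux : ∀ s, σ s * (φ s - c) = |φ s - c| := by
    intro s; rw [hσdef]; dsimp only
    rcases le_or_gt 0 (φ s - c) with hd | hd
    · rw [if_pos hd, one_mul, abs_of_nonneg hd]
    · rw [if_neg (not_le.2 hd), abs_of_neg hd]; ring
  set T : ℝ := ∫ s in k..(k + 1), σ s with hT
  have hTle : |T| ≤ 1 := by
    have := intervalIntegral.norm_integral_le_of_norm_le_const (C := 1) (f := σ) (a := k)
      (b := k + 1) (fun s _ => by rw [Real.norm_eq_abs]; exact hσ1 s)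
    rw [Real.norm_eq_abs] at this
    rw [hT]
    simpa using this
  set h : ℝ → ℝ := fun s => if s ≤ k then T else -σ s with hhdef
  have hhm' : Measurable h :=
    Measurable.ite (measurableSet_le measurable_id measurable_const) measurable_const hσm.neg
  have hh1 : ∀ s, |h s| ≤ 1 := by
    intro s; rw [hhdef]; dsimp only; split
    · exact hTle
    · rw [abs_neg]; exact hσ1 s
  have hIIh : ∀ u v : ℝ, IntervalIntegrable h MeasureTheory.volume u v :=
    fun u v => intervalIntegrable_of_bdd hhm' hh1 u v
  have hIIφ : ∀ u v : ℝ, IntervalIntegrable (fun s => φ s - c) MeasureTheory.volume u v :=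
    fun u v => (phiLM_intervalIntegrable hp hm u v).sub (intervalIntegrable_const (c := c))
  have hIIhφ : ∀ u v : ℝ,
      IntervalIntegrable (fun s => h s * (φ s - c)) MeasureTheory.volume u v :=
    fun u v => intervalIntegrable_bdd_mul (hIIφ u v) hhm' hh1
  have hint1 : ∫ s in (k - 1)..k, h s = T := by
    have : Set.EqOn h (fun _ => T) (Set.uIcc (k - 1) k) := by
      intro s hs
      rw [Set.uIcc_of_le (by linarith)] at hs
      rw [hhdef]; dsimp only; rw [if_pos hs.2]
    rw [intervalIntegral.integral_congr this, intervalIntegral.integral_const,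
      show k - (k - 1) = 1 by ring, one_smul]
  have hint2 : ∫ s in k..(k + 1), h s = -T := by
    have he : ∀ᵐ s ∂(MeasureTheory.volume), s ∈ Set.uIoc k (k + 1) → h s = -σ s := by
      refine MeasureTheory.ae_of_all _ fun s hs => ?_
      rw [Set.uIoc_of_le (by linarith)] at hs
      rw [hhdef]; dsimp only; rw [if_neg (not_le.2 hs.1)]
    rw [intervalIntegral.integral_congr_ae he, intervalIntegral.integral_neg, hT]
  have hsum0 : ∫ s in (k - 1)..(k + 1), h s = 0 := by
    rw [← intervalIntegral.integral_add_adjacent_intervals (hIIh (k - 1) k) (hIIh k (k + 1)),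
      hint1, hint2]
    ring
  have hprod1 : ∫ s in (k - 1)..k, h s * (φ s - c) = T * ∫ s in (k - 1)..k, (φ s - c) := by
    have : Set.EqOn (fun s => h s * (φ s - c)) (fun s => T * (φ s - c))
        (Set.uIcc (k - 1) k) := by
      intro s hs
      rw [Set.uIcc_of_le (by linarith)] at hs
      dsimp only
      rw [hhdef]; dsimp only; rw [if_pos hs.2]
    rw [intervalIntegral.integral_congr this, intervalIntegral.integral_const_mul]
  have hprod2 : ∫ s in k..(k + 1), h s * (φ s - c) = -∫ s in k..(k + 1), |φ s - c| := by
    have he : ∀ᵐ s ∂(MeasureTheory.volume), s ∈ Set.uIoc k (k + 1) →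
        h s * (φ s - c) = -|φ s - c| := by
      refine MeasureTheory.ae_of_all _ fun s hs => ?_
      rw [Set.uIoc_of_le (by linarith)] at hs
      rw [hhdef]; dsimp only; rw [if_neg (not_le.2 hs.1)]
      rw [← haux s]; ring
    rw [intervalIntegral.integral_congr_ae he, intervalIntegral.integral_neg]
  have e : k - 1 + 2 = k + 1 := by ring
  have hkey := core_estimate hp hm hunif c α β (k - 1) h hhm' hh1
    (by rw [e]; exact hsum0) hαk (by rw [e]; exact hkβ)
  rw [e] at hkey
  have hsplit : ∫ s in (k - 1)..(k + 1), h s * (φ s - c)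
      = (T * ∫ s in (k - 1)..k, (φ s - c)) - ∫ s in k..(k + 1), |φ s - c| := by
    rw [← intervalIntegral.integral_add_adjacent_intervals (hIIhφ (k - 1) k) (hIIhφ k (k + 1)),
      hprod1, hprod2]
    ring
  rw [hsplit] at hkey
  set I₁ : ℝ := ∫ s in (k - 1)..k, (φ s - c) with hI₁
  set I₂ : ℝ := ∫ s in k..(k + 1), |φ s - c| with hI₂
  set J₁ : ℝ := ∫ s in (k - 1)..k, |φ s - c| with hJ₁
  have habs1 : |I₁| ≤ J₁ := by
    rw [hI₁, hJ₁]
    exact intervalIntegral.abs_integral_le_integral_abs (by linarith)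
  have habsT : |T * I₁| ≤ J₁ := by
    rw [abs_mul]
    calc |T| * |I₁| ≤ 1 * J₁ := mul_le_mul hTle habs1 (abs_nonneg _) zero_le_one
      _ = J₁ := one_mul _
  have h1 := abs_le.1 hkey
  linarith [neg_abs_le (T * I₁), le_abs_self (T * I₁), abs_le.1 habsT]

lemma step_backward (hp : FiniteOnBounded μp) (hm : FiniteOnBounded μm)
    (hunif : unifE (μp + μm) < ⊤) (c α β k : ℝ) (hαk : α ≤ k) (hkβ : k + 2 ≤ β) :
    (∫ s in k..(k + 1), |phiLM μp μm s - c|) ≤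
      (∫ s in (k + 1)..(k + 2), |phiLM μp μm s - c|) + wNorm μp μm 0 0 (Set.Icc α β) := by
  set φ := phiLM μp μm with hφdef
  set σ : ℝ → ℝ := fun s => if 0 ≤ φ s - c then 1 else -1 with hσdef
  have hσm : Measurable σ :=
    Measurable.ite
      (measurableSet_le measurable_const ((phiLM_measurable hp hm).sub measurable_const))
      measurable_const measurable_const
  have hσ1 : ∀ s, |σ s| ≤ 1 := by
    intro s; rw [hσdef]; dsimp only; split <;> norm_num
  have haux : ∀ s, σ s * (φ s - c) = |φ s - c| := by
    intro s; rw [hσdef]; dsimp only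
    rcases le_or_gt 0 (φ s - c) with hd | hd
    · rw [if_pos hd, one_mul, abs_of_nonneg hd]
    · rw [if_neg (not_le.2 hd), abs_of_neg hd]; ring
  set T : ℝ := ∫ s in k..(k + 1), σ s with hT
  have hTle : |T| ≤ 1 := by
    have := intervalIntegral.norm_integral_le_of_norm_le_const (C := 1) (f := σ) (a := k)
      (b := k + 1) (fun s _ => by rw [Real.norm_eq_abs]; exact hσ1 s)
    rw [Real.norm_eq_abs] at this
    rw [hT]
    simpa using this
  set h : ℝ → ℝ := fun s => if s ≤ k + 1 then σ s else -T with hhdef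
  have hhm' : Measurable h :=
    Measurable.ite (measurableSet_le measurable_id measurable_const) hσm measurable_const
  have hh1 : ∀ s, |h s| ≤ 1 := by
    intro s; rw [hhdef]; dsimp only; split
    · exact hσ1 s
    · rw [abs_neg]; exact hTle
  have hIIh : ∀ u v : ℝ, IntervalIntegrable h MeasureTheory.volume u v :=
    fun u v => intervalIntegrable_of_bdd hhm' hh1 u v
  have hIIφ : ∀ u v : ℝ, IntervalIntegrable (fun s => φ s - c) MeasureTheory.volume u v :=
    fun u v => (phiLM_intervalIntegrable hp hm u v).sub (intervalIntegrable_const (c := c))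
  have hIIhφ : ∀ u v : ℝ,
      IntervalIntegrable (fun s => h s * (φ s - c)) MeasureTheory.volume u v :=
    fun u v => intervalIntegrable_bdd_mul (hIIφ u v) hhm' hh1
  have hint1 : ∫ s in k..(k + 1), h s = T := by
    have : Set.EqOn h σ (Set.uIcc k (k + 1)) := by
      intro s hs
      rw [Set.uIcc_of_le (by linarith)] at hs
      rw [hhdef]; dsimp only; rw [if_pos hs.2]
    rw [intervalIntegral.integral_congr this, hT]
  have hint2 : ∫ s in (k + 1)..(k + 2), h s = -T := by
    have he : ∀ᵐ s ∂(MeasureTheory.volume), s ∈ Set.uIoc (k + 1) (k + 2) →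
        h s = -T := by
      refine MeasureTheory.ae_of_all _ fun s hs => ?_
      rw [Set.uIoc_of_le (by linarith)] at hs
      rw [hhdef]; dsimp only; rw [if_neg (not_le.2 hs.1)]
    rw [intervalIntegral.integral_congr_ae he, intervalIntegral.integral_const,
      show k + 2 - (k + 1) = 1 by ring, one_smul]
  have hsum0 : ∫ s in k..(k + 2), h s = 0 := by
    rw [← intervalIntegral.integral_add_adjacent_intervals (hIIh k (k + 1))
      (hIIh (k + 1) (k + 2)), hint1, hint2]
    ring
  have hprod1 : ∫ s in k..(k + 1), h s * (φ s - c) = ∫ s in k..(k + 1), |φ s - c| := by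
    have : Set.EqOn (fun s => h s * (φ s - c)) (fun s => |φ s - c|) (Set.uIcc k (k + 1)) := by
      intro s hs
      rw [Set.uIcc_of_le (by linarith)] at hs
      dsimp only
      rw [hhdef]; dsimp only; rw [if_pos hs.2, haux s]
    rw [intervalIntegral.integral_congr this]
  have hprod2 : ∫ s in (k + 1)..(k + 2), h s * (φ s - c)
      = -T * ∫ s in (k + 1)..(k + 2), (φ s - c) := by
    have he : ∀ᵐ s ∂(MeasureTheory.volume), s ∈ Set.uIoc (k + 1) (k + 2) →
        h s * (φ s - c) = -T * (φ s - c) := by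
      refine MeasureTheory.ae_of_all _ fun s hs => ?_
      rw [Set.uIoc_of_le (by linarith)] at hs
      rw [hhdef]; dsimp only; rw [if_neg (not_le.2 hs.1)]
    rw [intervalIntegral.integral_congr_ae he, intervalIntegral.integral_const_mul]
  have hkey := core_estimate hp hm hunif c α β k h hhm' hh1 hsum0 hαk hkβ
  have hsplit : ∫ s in k..(k + 2), h s * (φ s - c)
      = (∫ s in k..(k + 1), |φ s - c|) + (-T * ∫ s in (k + 1)..(k + 2), (φ s - c)) := by
    rw [← intervalIntegral.integral_add_adjacent_intervals (hIIhφ k (k + 1))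
      (hIIhφ (k + 1) (k + 2)), hprod1, hprod2]
  rw [hsplit] at hkey
  set I₃ : ℝ := ∫ s in (k + 1)..(k + 2), (φ s - c) with hI₃
  set J₃ : ℝ := ∫ s in (k + 1)..(k + 2), |φ s - c| with hJ₃
  have habs3 : |I₃| ≤ J₃ := by
    rw [hI₃, hJ₃]
    exact intervalIntegral.abs_integral_le_integral_abs (by linarith)
  have habsT : |(-T) * I₃| ≤ J₃ := by
    rw [abs_mul, abs_neg]
    calc |T| * |I₃| ≤ 1 * J₃ := mul_le_mul hTle habs3 (abs_nonneg _) zero_le_one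
      _ = J₃ := one_mul _
  have h1 := abs_le.1 hkey
  linarith [abs_le.1 habsT, neg_abs_le ((-T) * I₃), le_abs_self ((-T) * I₃)]

end Steps
/-- Unit-interval bound for the primitive via the Wasserstein-type seminorm. -/
theorem unit_interval_primitive_bound
    (μp μm : MeasureTheory.Measure ℝ)
    (hfinp : FiniteOnBounded μp) (hfinm : FiniteOnBounded μm)
    (hunif : unifE (μp + μm) < ⊤)
    (c₀ : ℝ) (hc₀ : |c₀| ≤ unifNorm (μp + μm))
    (hc₀' : (∫ s in (-1:ℝ)..1, |phiLM μp μm s - c₀|) ≤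
      2 * wNorm μp μm 0 0 (Set.Icc (-1) 1)) :
    ∀ α β k : ℤ, α ≤ -1 → 1 ≤ β → α ≤ k → k ≤ β - 1 →
      (∫ s in (k : ℝ)..((k : ℝ) + 1), |phiLM μp μm s - c₀|) ≤
        2 * ((max (k + 1) (-k) : ℤ) : ℝ) * wNorm μp μm 0 0 (Set.Icc (α : ℝ) (β : ℝ)) := by
  intro α β k hα hβ hαk hkβ
  set φ := phiLM μp μm with hφdef
  set N := wNorm μp μm 0 0 (Set.Icc (α : ℝ) (β : ℝ)) with hNdef
  have hα1 : (α : ℝ) ≤ -1 := by exact_mod_cast hα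
  have hβ1 : (1 : ℝ) ≤ (β : ℝ) := by exact_mod_cast hβ
  have hN0 : 0 ≤ N := wNorm_nonneg' hfinp hfinm hunif _
  have hmono : wNorm μp μm 0 0 (Set.Icc (-1 : ℝ) 1) ≤ N :=
    wNorm_mono hfinp hfinm hunif (Set.Icc_subset_Icc hα1 hβ1)
  have hbase : (∫ s in (-1:ℝ)..1, |φ s - c₀|) ≤ 2 * N := le_trans hc₀' (by linarith)
  have hII : ∀ u v : ℝ, IntervalIntegrable (fun s => |φ s - c₀|) MeasureTheory.volume u v :=
    fun u v => ((phiLM_intervalIntegrable hfinp hfinm u v).sub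
      (intervalIntegrable_const (c := c₀))).abs
  have hsplitbase : (∫ s in (-1:ℝ)..1, |φ s - c₀|)
      = (∫ s in (-1:ℝ)..0, |φ s - c₀|) + ∫ s in (0:ℝ)..1, |φ s - c₀| :=
    (intervalIntegral.integral_add_adjacent_intervals (hII (-1) 0) (hII 0 1)).symm
  have hpos1 : 0 ≤ ∫ s in (-1:ℝ)..0, |φ s - c₀| :=
    intervalIntegral.integral_nonneg (by norm_num) (fun s _ => abs_nonneg _)
  have hpos2 : 0 ≤ ∫ s in (0:ℝ)..1, |φ s - c₀| :=
    intervalIntegral.integral_nonneg (by norm_num) (fun s _ => abs_nonneg _)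
  have hbase1 : (∫ s in (0:ℝ)..1, |φ s - c₀|) ≤ 2 * N := by linarith
  have hbase2 : (∫ s in (-1:ℝ)..0, |φ s - c₀|) ≤ 2 * N := by linarith
  have claim1 : ∀ n : ℤ, 0 ≤ n → ((n : ℝ) + 1 ≤ (β : ℝ)) →
      (∫ s in (n : ℝ)..((n : ℝ) + 1), |φ s - c₀|) ≤ ((n : ℝ) + 2) * N := by
    refine Int.le_induction ?_ ?_
    · intro _
      have h00 : ((0 : ℤ) : ℝ) = 0 := by norm_num
      rw [h00, zero_add, zero_add]
      linarith
    · intro n hn ih hβn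
      have hcast : ((n + 1 : ℤ) : ℝ) = (n : ℝ) + 1 := by push_cast; ring
      rw [hcast] at hβn ⊢
      have hn' : (0 : ℝ) ≤ (n : ℝ) := by exact_mod_cast hn
      have hstep := step_forward hfinp hfinm hunif c₀ (α : ℝ) (β : ℝ) ((n : ℝ) + 1)
        (by linarith) (by linarith)
      rw [show (n : ℝ) + 1 - 1 = (n : ℝ) by ring] at hstep
      have hih := ih (by linarith)
      rw [← hNdef] at hstep
      calc (∫ s in ((n:ℝ)+1)..((n:ℝ)+1+1), |φ s - c₀|)
          ≤ (∫ s in (n:ℝ)..((n:ℝ)+1), |φ s - c₀|) + N := hstep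
        _ ≤ ((n : ℝ) + 2) * N + N := by linarith
        _ = ((n : ℝ) + 1 + 2) * N := by ring
  have claim2 : ∀ n : ℤ, 1 ≤ n → ((α : ℝ) ≤ -(n : ℝ)) →
      (∫ s in (-(n : ℝ))..(-(n : ℝ) + 1), |φ s - c₀|) ≤ ((n : ℝ) + 1) * N := by
    refine Int.le_induction ?_ ?_
    · intro _
      have h11 : ((1 : ℤ) : ℝ) = 1 := by norm_num
      rw [h11, show -(1:ℝ) + 1 = 0 by ring]
      linarith
    · intro n hn ih hαn
      have hcast : ((n + 1 : ℤ) : ℝ) = (n : ℝ) + 1 := by push_cast; ring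
      rw [hcast] at hαn ⊢
      have hn' : (1 : ℝ) ≤ (n : ℝ) := by exact_mod_cast hn
      have hstep := step_backward hfinp hfinm hunif c₀ (α : ℝ) (β : ℝ) (-(n : ℝ) - 1)
        (by linarith) (by linarith)
      rw [show -(n : ℝ) - 1 + 1 = -(n : ℝ) by ring,
        show -(n : ℝ) - 1 + 2 = -(n : ℝ) + 1 by ring] at hstep
      have hih := ih (by linarith)
      rw [← hNdef] at hstep
      calc (∫ s in (-((n:ℝ)+1))..(-((n:ℝ)+1)+1), |φ s - c₀|)
          = ∫ s in (-(n:ℝ)-1)..(-(n:ℝ)), |φ s - c₀| := by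
            rw [show -((n:ℝ)+1) = -(n:ℝ) - 1 by ring, show -(n:ℝ) - 1 + 1 = -(n:ℝ) by ring]
        _ ≤ (∫ s in (-(n:ℝ))..(-(n:ℝ)+1), |φ s - c₀|) + N := hstep
        _ ≤ ((n : ℝ) + 1) * N + N := by linarith
        _ = ((n : ℝ) + 1 + 1) * N := by ring
  rcases le_or_gt 0 k with hk | hk
  · have hkβ' : ((k : ℝ) + 1) ≤ (β : ℝ) := by
      have : k + 1 ≤ β := by omega
      exact_mod_cast this
    have h1 := claim1 k hk hkβ'
    have hmax : max (k + 1) (-k) = k + 1 := max_eq_left (by omega)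
    rw [hmax]
    have hk' : (0 : ℝ) ≤ (k : ℝ) := by exact_mod_cast hk
    have hfin : ((k : ℝ) + 2) * N ≤ 2 * (((k + 1 : ℤ)) : ℝ) * N := by
      push_cast
      nlinarith
    exact le_trans h1 hfin
  · have hk1 : 1 ≤ -k := by omega
    have hαk' : (α : ℝ) ≤ -((-k : ℤ) : ℝ) := by
      push_cast
      have : (α : ℝ) ≤ (k : ℝ) := by exact_mod_cast hαk
      linarith
    have h2 := claim2 (-k) hk1 hαk'
    rw [show (((-k : ℤ)) : ℝ) = -(k : ℝ) by push_cast; ring] at h2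
    rw [show -(-(k : ℝ)) = (k : ℝ) by ring] at h2
    have hmax : max (k + 1) (-k) = -k := max_eq_right (by omega)
    rw [hmax]
    have hk' : (1 : ℝ) ≤ -(k : ℝ) := by
      have : (k : ℝ) ≤ -1 := by exact_mod_cast (by omega : k ≤ -1)
      linarith
    have hfin : (-(k : ℝ) + 1) * N ≤ 2 * (((-k : ℤ)) : ℝ) * N := by
      push_cast
      nlinarith
    exact le_trans h2 hfin
end
end

section
/- Lipschitz continuity of translation for the Wasserstein-type seminorm: Let μ be a real local measure on ℝ with ‖μ‖_unif < ∞ and let h ∈ ℝ with |h| ≤ 1. Then ‖μ − μ(·+h)‖_ℝ ≤ 3·|h|·‖μ‖_unif. -/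
open MeasureTheory Set Filter

noncomputable section

private lemma integral_lmTranslate' (ν : MeasureTheory.Measure ℝ) (h : ℝ) {w : ℝ → ℝ}
    (hw : Continuous w) :
    ∫ x, w x ∂(lmTranslate ν h) = ∫ x, w (x - h) ∂ν := by
  unfold lmTranslate
  exact MeasureTheory.integral_map (measurable_id.sub_const h).aemeasurable
    hw.aestronglyMeasurable

private lemma unif_cover_three (ν : MeasureTheory.Measure ℝ) (t0 : ℝ) :
    ν (Set.Ioc t0 (t0 + 3)) ≤ 3 * unifE ν := by
  have hsplit : Set.Ioc t0 (t0 + 3) ⊆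
      Set.Ioc t0 (t0 + 1) ∪ Set.Ioc (t0 + 1) (t0 + 1 + 1) ∪
        Set.Ioc (t0 + 1 + 1) (t0 + 1 + 1 + 1) := by
    rw [Set.Ioc_union_Ioc_eq_Ioc (by linarith) (by linarith),
        Set.Ioc_union_Ioc_eq_Ioc (by linarith) (by linarith)]
    intro x hx
    exact ⟨hx.1, by linarith [hx.2]⟩
  have h1 : ν (Set.Ioc t0 (t0 + 1)) ≤ unifE ν := le_iSup (fun t => ν (Set.Ioc t (t + 1))) t0
  have h2 : ν (Set.Ioc (t0 + 1) (t0 + 1 + 1)) ≤ unifE ν :=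
    le_iSup (fun t => ν (Set.Ioc t (t + 1))) (t0 + 1)
  have h3 : ν (Set.Ioc (t0 + 1 + 1) (t0 + 1 + 1 + 1)) ≤ unifE ν :=
    le_iSup (fun t => ν (Set.Ioc t (t + 1))) (t0 + 1 + 1)
  calc ν (Set.Ioc t0 (t0 + 3)) ≤ ν (Set.Ioc t0 (t0 + 1) ∪ Set.Ioc (t0 + 1) (t0 + 1 + 1) ∪
        Set.Ioc (t0 + 1 + 1) (t0 + 1 + 1 + 1)) := measure_mono hsplit
    _ ≤ ν (Set.Ioc t0 (t0 + 1) ∪ Set.Ioc (t0 + 1) (t0 + 1 + 1)) +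
        ν (Set.Ioc (t0 + 1 + 1) (t0 + 1 + 1 + 1)) := measure_union_le _ _
    _ ≤ ν (Set.Ioc t0 (t0 + 1)) + ν (Set.Ioc (t0 + 1) (t0 + 1 + 1)) +
        ν (Set.Ioc (t0 + 1 + 1) (t0 + 1 + 1 + 1)) :=
      add_le_add_left (measure_union_le _ _) _
    _ ≤ unifE ν + unifE ν + unifE ν := add_le_add (add_le_add h1 h2) h3
    _ = 3 * unifE ν := by ring

/-- Lipschitz continuity of translation for the Wasserstein-type seminorm. -/
theorem translation_lipschitz_wasserstein
    (μp μm : MeasureTheory.Measure ℝ)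
    (hfinp : FiniteOnBounded μp) (hfinm : FiniteOnBounded μm)
    (hunif : unifE (μp + μm) < ⊤)
    (h : ℝ) (hh : |h| ≤ 1) :
    wNorm μp μm (lmTranslate μp h) (lmTranslate μm h) Set.univ ≤
      3 * |h| * unifNorm (μp + μm) := by
  have hRHS : (0:ℝ) ≤ 3 * |h| * unifNorm (μp + μm) :=
    mul_nonneg (mul_nonneg (by norm_num) (abs_nonneg h)) ENNReal.toReal_nonneg
  apply Real.sSup_le _ hRHS
  rintro r ⟨w, hlip, hcs, -, hdiam, rfl⟩
  have hwc : Continuous w := hlip.continuous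
  by_cases hne : (tsupport w).Nonempty
  swap
  · -- w is identically zero
    have hw0 : w = fun _ => 0 := by
      funext x
      by_contra hx
      exact hne ⟨x, subset_tsupport w hx⟩
    simp [lmInt, hw0]
    exact hRHS
  -- nonempty support case
  haveI : IsFiniteMeasureOnCompacts μp := ⟨fun {K} hK => hfinp _ hK.isBounded⟩
  haveI : IsFiniteMeasureOnCompacts μm := ⟨fun {K} hK => hfinm _ hK.isBounded⟩
  set m := sInf (tsupport w) with hm
  have hKc : IsCompact (tsupport w) := hcs
  have hbdd : BddBelow (tsupport w) := hKc.bddBelow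
  have hm_mem : m ∈ tsupport w := (isClosed_tsupport w).csInf_mem hne hbdd
  have hsub : ∀ y ∈ tsupport w, m ≤ y ∧ y ≤ m + 2 := by
    intro y hy
    refine ⟨csInf_le hbdd hy, ?_⟩
    have hd : dist y m ≤ Metric.diam (tsupport w) :=
      Metric.dist_le_diam_of_mem hKc.isBounded hy hm_mem
    have : |y - m| ≤ 2 := by
      rw [Real.dist_eq] at hd; linarith
    linarith [abs_le.mp this |>.2]
  have hwm : w m = 0 := by
    have hEq : Set.EqOn w (fun _ => 0) (Set.Iio m) := by
      intro x hx
      apply image_eq_zero_of_notMem_tsupport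
      intro hmem
      exact absurd (csInf_le hbdd hmem) (not_le.2 hx)
    have h2 := hEq.closure hwc continuous_const
    have : m ∈ closure (Set.Iio m) := by
      rw [closure_Iio]; exact Set.self_mem_Iic
    exact h2 this
  have hwx : ∀ x : ℝ, w x ≠ 0 → m < x ∧ x ≤ m + 2 := by
    intro x hx
    have hxm : x ∈ tsupport w := subset_tsupport w hx
    obtain ⟨h1, h2⟩ := hsub x hxm
    refine ⟨lt_of_le_of_ne h1 ?_, h2⟩
    rintro rfl
    exact hx hwm
  set t0 : ℝ := m + min h 0 with ht0
  set S : Set ℝ := Set.Ioc t0 (t0 + 3) with hS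
  have hminle : min h 0 ≤ 0 := min_le_right _ _
  have hmin1 : -1 ≤ min h 0 := le_min (abs_le.mp hh).1 (by norm_num)
  have hmin2 : h ≤ min h 0 + 1 := by
    rcases le_total h 0 with h' | h'
    · rw [min_eq_left h']; linarith
    · rw [min_eq_right h']; linarith [(abs_le.mp hh).2]
  set g : ℝ → ℝ := fun x => w x - w (x - h) with hg
  have hg0 : ∀ x ∉ S, g x = 0 := by
    intro x hx
    by_contra hgx
    apply hx
    rcases sub_ne_zero.mp (by simpa [hg] using hgx) with hne'
    by_cases hwx0 : w x ≠ 0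
    · obtain ⟨h1, h2⟩ := hwx x hwx0
      exact ⟨by simp only [ht0]; linarith, by simp only [ht0]; linarith⟩
    · push_neg at hwx0
      have hwxh : w (x - h) ≠ 0 := fun hc => hne' (by rw [hwx0, hc])
      obtain ⟨h1, h2⟩ := hwx (x - h) hwxh
      exact ⟨by simp only [ht0]; linarith [min_le_left h 0], by simp only [ht0]; linarith⟩
  have hgbound : ∀ x ∈ S, ‖g x‖ ≤ |h| := by
    intro x _
    have hd : dist (w x) (w (x - h)) ≤ 1 * dist x (x - h) := hlip.dist_le_mul x (x - h)
    rw [Real.dist_eq, Real.dist_eq] at hd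
    simp only [hg, Real.norm_eq_abs]
    have : x - (x - h) = h := by ring
    rw [this] at hd
    linarith
  have hgc : Continuous g := hwc.sub (hwc.comp (continuous_id.sub continuous_const))
  have hSbdd : Bornology.IsBounded S := Metric.isBounded_Ioc _ _
  have hμpS : μp S < ⊤ := hfinp S hSbdd
  have hμmS : μm S < ⊤ := hfinm S hSbdd
  -- transform the translated integrals
  have hcs' : HasCompactSupport (fun x => w (x - h)) :=
    hcs.comp_homeomorph (Homeomorph.subRight h)
  have hwc' : Continuous (fun x => w (x - h)) := hwc.comp (continuous_id.sub continuous_const)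
  have hip : Integrable w μp := hwc.integrable_of_hasCompactSupport hcs
  have him : Integrable w μm := hwc.integrable_of_hasCompactSupport hcs
  have hip' : Integrable (fun x => w (x - h)) μp := hwc'.integrable_of_hasCompactSupport hcs'
  have him' : Integrable (fun x => w (x - h)) μm := hwc'.integrable_of_hasCompactSupport hcs'
  have key : lmInt μp μm w - lmInt (lmTranslate μp h) (lmTranslate μm h) w
      = (∫ x, g x ∂μp) - (∫ x, g x ∂μm) := by
    simp only [lmInt, integral_lmTranslate' μp h hwc, integral_lmTranslate' μm h hwc, hg]
    rw [MeasureTheory.integral_sub hip hip', MeasureTheory.integral_sub him him']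
    ring
  rw [key]
  -- bound the two integrals
  have hboundp : |∫ x, g x ∂μp| ≤ |h| * (μp S).toReal := by
    rw [← MeasureTheory.setIntegral_eq_integral_of_forall_compl_eq_zero hg0]
    exact MeasureTheory.norm_setIntegral_le_of_norm_le_const hμpS hgbound
  have hboundm : |∫ x, g x ∂μm| ≤ |h| * (μm S).toReal := by
    rw [← MeasureTheory.setIntegral_eq_integral_of_forall_compl_eq_zero hg0]
    exact MeasureTheory.norm_setIntegral_le_of_norm_le_const hμmS hgbound
  have habs : |(∫ x, g x ∂μp) - (∫ x, g x ∂μm)| ≤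
      |h| * ((μp S).toReal + (μm S).toReal) := by
    calc |(∫ x, g x ∂μp) - (∫ x, g x ∂μm)| ≤ |∫ x, g x ∂μp| + |∫ x, g x ∂μm| :=
          abs_sub _ _
      _ ≤ |h| * (μp S).toReal + |h| * (μm S).toReal := add_le_add hboundp hboundm
      _ = |h| * ((μp S).toReal + (μm S).toReal) := by ring
  have hsum : (μp S).toReal + (μm S).toReal = ((μp + μm) S).toReal := by
    rw [Measure.add_apply, ENNReal.toReal_add hμpS.ne hμmS.ne]
  have hcover : ((μp + μm) S).toReal ≤ 3 * unifNorm (μp + μm) := by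
    have h1 : (μp + μm) S ≤ 3 * unifE (μp + μm) := unif_cover_three (μp + μm) t0
    have h2 : (3 : ENNReal) * unifE (μp + μm) ≠ ⊤ :=
      ENNReal.mul_ne_top (by norm_num) hunif.ne
    calc ((μp + μm) S).toReal ≤ ((3 : ENNReal) * unifE (μp + μm)).toReal :=
          ENNReal.toReal_mono h2 h1
      _ = 3 * unifNorm (μp + μm) := by
          rw [ENNReal.toReal_mul, unifNorm]
          norm_num
  calc |(∫ x, g x ∂μp) - (∫ x, g x ∂μm)| ≤ |h| * ((μp S).toReal + (μm S).toReal) := habs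
    _ = |h| * ((μp + μm) S).toReal := by rw [hsum]
    _ ≤ |h| * (3 * unifNorm (μp + μm)) :=
        mul_le_mul_of_nonneg_left hcover (abs_nonneg h)
    _ = 3 * |h| * unifNorm (μp + μm) := by ring
end
end
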